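/- arXiv:0904.3780 — 6 statements merged into one kernel-verified Lean document; each statement's English description precedes it below -/
import Mathlib

section
/- Let μ, ε, α, ρ be positive reals with ρ < 1 and μ ≥ 4αε/(1-ρ). Define the sequence E(1) = 2αε/(1-ρ) and E(k+1) = (1 + E(k)/(μ - E(k)))·α·ε / (1 - ρ·E(k)/(μ - E(k))). Then E(2) ≤ E(1). -/
theorem reweighted_base_case
    (α ε ρ μ : ℝ) (hα : 0 < α) (hε : 0 < ε) (hρ0 : 0 < ρ) (hρ1 : ρ < 1)
    (hμ0 : 0 < μ) (hμ : μ ≥ 4 * α * ε / (1 - ρ))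
    (E : ℕ → ℝ)
    (hE1 : E 1 = 2 * α * ε / (1 - ρ))
    (hrec : ∀ k ≥ 1, E (k + 1) =
      (1 + E k / (μ - E k)) * α * ε / (1 - ρ * (E k / (μ - E k)))) :
    E 2 ≤ E 1 := by
  have h1ρ : (0:ℝ) < 1 - ρ := by linarith
  rw [hrec 1 le_rfl, hE1]
  set e := 2 * α * ε / (1 - ρ) with he
  have he0 : 0 < e := by positivity
  have h4 : 4 * α * ε / (1 - ρ) = 2 * e := by rw [he]; ring
  have hμ2e : μ ≥ 2 * e := by rw [← h4]; exact hμ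
  have hme0 : 0 < μ - e := by linarith
  set t := e / (μ - e) with ht
  have ht0 : 0 < t := div_pos he0 hme0
  have ht1 : t ≤ 1 := by rw [ht, div_le_one hme0]; linarith
  have hρt : 1 - ρ * t > 0 := by nlinarith
  rw [he, div_le_div_iff₀ hρt h1ρ]
  nlinarith [mul_nonneg (mul_nonneg hα.le hε.le)
    (mul_nonneg (by linarith : (0:ℝ) ≤ 1 + ρ) (by linarith : (0:ℝ) ≤ 1 - t))]
end

section
/- Let μ, ε, α, ρ be positive reals with ρ < 1 and μ ≥ 4αε/(1-ρ). Define f(t) = (1 + t/(μ - t))·α·ε / (1 - ρ·t/(μ - t)) for 0 ≤ t < μ/(1+ρ). Then f is monotone increasing on this interval. -/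
theorem reweighted_update_monotone
    (α ε ρ μ : ℝ) (hα : 0 < α) (hε : 0 < ε) (hρ0 : 0 < ρ) (hρ1 : ρ < 1)
    (hμ0 : 0 < μ) (hμ : μ ≥ 4 * α * ε / (1 - ρ))
    (f : ℝ → ℝ)
    (hf : ∀ t, f t = (1 + t / (μ - t)) * α * ε / (1 - ρ * (t / (μ - t)))) :
    ∀ s t : ℝ, 0 ≤ s → s ≤ t → t < μ / (1 + ρ) → f s ≤ f t := by
  intro s t hs hst ht
  have h1ρ : (0:ℝ) < 1 + ρ := by linarith
  have hts : s < μ / (1 + ρ) := lt_of_le_of_lt hst ht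
  have hdt : 0 < μ - (1 + ρ) * t := by
    have := (lt_div_iff₀ h1ρ).mp ht; linarith
  have hds : 0 < μ - (1 + ρ) * s := by
    have := (lt_div_iff₀ h1ρ).mp hts; linarith
  have ht0 : 0 ≤ t := le_trans hs hst
  have key : ∀ x : ℝ, 0 ≤ x → 0 < μ - (1 + ρ) * x →
      f x = α * ε * μ / (μ - (1 + ρ) * x) := by
    intro x hx hdx
    have hμx : 0 < μ - x := by nlinarith
    have h2 : 1 - ρ * (x / (μ - x)) = (μ - (1 + ρ) * x) / (μ - x) := by
      field_simp; ring
    rw [hf, h2]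
    rw [div_div_eq_mul_div]
    rw [div_eq_div_iff hdx.ne' hdx.ne']
    have hμx' : μ - x ≠ 0 := hμx.ne'
    field_simp
    ring_nf
  rw [key s hs hds, key t ht0 hdt]
  have hnum : 0 ≤ α * ε * μ := by positivity
  have hle : μ - (1 + ρ) * t ≤ μ - (1 + ρ) * s := by nlinarith
  gcongr
end

section
/- Let μ, ε, α, ρ be positive reals with ρ < 1 and μ ≥ 4αε/(1-ρ). The sequence defined by E(1) = 2αε/(1-ρ) and E(k+1) = (1 + E(k)/(μ - E(k)))·α·ε / (1 - ρ·E(k)/(μ - E(k))) is monotonically decreasing and bounded below by 0, and hence converges. -/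
private lemma rw_aux (α ε ρ μ x : ℝ) (h1 : μ - x ≠ 0)
    (h2 : μ - (1 + ρ) * x ≠ 0) :
    (1 + x / (μ - x)) * α * ε / (1 - ρ * (x / (μ - x)))
      = α * ε * μ / (μ - (1 + ρ) * x) := by
  have h3 : 1 - ρ * (x / (μ - x)) = (μ - (1 + ρ) * x) / (μ - x) := by
    field_simp; ring
  have h4 : (1 + x / (μ - x)) * α * ε = α * ε * μ / (μ - x) := by
    field_simp; ring
  rw [h3, h4, div_div_div_eq, mul_comm (μ - x) (μ - (1 + ρ) * x),
    mul_div_mul_right _ _ h1]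

theorem reweighted_sequence_converges
    (α ε ρ μ : ℝ) (hα : 0 < α) (hε : 0 < ε) (hρ0 : 0 < ρ) (hρ1 : ρ < 1)
    (hμ0 : 0 < μ) (hμ : μ ≥ 4 * α * ε / (1 - ρ))
    (E : ℕ → ℝ)
    (hE1 : E 1 = 2 * α * ε / (1 - ρ))
    (hrec : ∀ k ≥ 1, E (k + 1) =
      (1 + E k / (μ - E k)) * α * ε / (1 - ρ * (E k / (μ - E k)))) :
    (∀ k ≥ 1, E (k + 1) ≤ E k) ∧ (∀ k ≥ 1, 0 ≤ E k) ∧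
      ∃ L : ℝ, Filter.Tendsto E Filter.atTop (nhds L) := by
  have hρ : 0 < 1 - ρ := by linarith
  set B : ℝ := 2 * α * ε / (1 - ρ) with hBdef
  have hB0 : 0 < B := by positivity
  have hμB : 2 * B ≤ μ := by
    have : 4 * α * ε / (1 - ρ) = 2 * B := by rw [hBdef]; ring
    linarith [hμ, this.symm.le]
  have hBαε : B * (1 - ρ) = 2 * α * ε := by
    rw [hBdef]; field_simp
  -- key invariant
  have key : ∀ k ≥ 1, 0 < E k ∧ E k ≤ B ∧ E (k + 1) ≤ E k := by
    intro k hk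
    induction k with
    | zero => omega
    | succ n ih =>
      rcases Nat.eq_or_lt_of_le hk with h1 | h1
      · -- n + 1 = 1
        have hn : n = 0 := by omega
        subst hn
        have hE1B : E 1 = B := hE1
        have hne : μ - E 1 ≠ 0 := by rw [hE1B]; nlinarith
        have hd : 0 < μ - (1 + ρ) * E 1 := by rw [hE1B]; nlinarith
        have h2 : E 2 = α * ε * μ / (μ - (1 + ρ) * E 1) := by
          rw [hrec 1 le_rfl, rw_aux _ _ _ _ _ hne hd.ne']
        refine ⟨by rw [hE1B]; exact hB0, le_of_eq hE1B, ?_⟩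
        rw [h2, div_le_iff₀ hd, hE1B]
        nlinarith [hBαε, mul_nonneg (mul_nonneg (by linarith : (0:ℝ) ≤ 1 + ρ) hB0.le) (by linarith : (0:ℝ) ≤ μ - 2 * B), hμ0]
      · have hn : 1 ≤ n := by omega
        obtain ⟨h0, hB, hmono⟩ := ih hn
        have h0' : 0 < E (n + 1) := by
          have hne : μ - E n ≠ 0 := by nlinarith
          have hd : 0 < μ - (1 + ρ) * E n := by nlinarith
          rw [hrec n hn, rw_aux _ _ _ _ _ hne hd.ne']
          positivity
        have hB' : E (n + 1) ≤ B := le_trans hmono hB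
        refine ⟨h0', hB', ?_⟩
        have hne : μ - E n ≠ 0 := by nlinarith
        have hd : 0 < μ - (1 + ρ) * E n := by nlinarith
        have hne' : μ - E (n + 1) ≠ 0 := by nlinarith
        have hd' : 0 < μ - (1 + ρ) * E (n + 1) := by nlinarith
        have hEn1 : E (n + 1) = α * ε * μ / (μ - (1 + ρ) * E n) := by
          rw [hrec n hn, rw_aux _ _ _ _ _ hne hd.ne']
        calc E (n + 1 + 1)
            = α * ε * μ / (μ - (1 + ρ) * E (n + 1)) := by
              rw [hrec (n + 1) (by omega), rw_aux _ _ _ _ _ hne' hd'.ne']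
          _ ≤ α * ε * μ / (μ - (1 + ρ) * E n) := by
              apply div_le_div_of_nonneg_left (by positivity) hd
              nlinarith [mul_le_mul_of_nonneg_left hmono (by linarith : (0:ℝ) ≤ 1 + ρ)]
          _ = E (n + 1) := hEn1.symm
  have hmono : ∀ k ≥ 1, E (k + 1) ≤ E k := fun k hk => (key k hk).2.2
  have hpos : ∀ k ≥ 1, 0 ≤ E k := fun k hk => (key k hk).1.le
  refine ⟨hmono, hpos, ?_⟩
  -- shifted sequence
  set F : ℕ → ℝ := fun n => E (n + 1) with hF
  have hFanti : Antitone F := by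
    apply antitone_nat_of_succ_le
    intro n
    exact hmono (n + 1) (by omega)
  have hFbdd : BddBelow (Set.range F) := by
    refine ⟨0, ?_⟩
    rintro x ⟨n, rfl⟩
    exact hpos (n + 1) (by omega)
  have hFt : Filter.Tendsto F Filter.atTop (nhds (⨅ n, F n)) :=
    tendsto_atTop_ciInf hFanti hFbdd
  refine ⟨⨅ n, F n, ?_⟩
  rw [← Filter.tendsto_add_atTop_iff_nat 1]
  exact hFt
end

section
/- Let h ∈ ℝᵈ, let T₀ ⊆ {1,…,d} with |T₀| = s, and let T₁ be the set of s indices of largest absolute value of h restricted to T₀ᶜ. Then ‖h restricted to (T₀ ∪ T₁)ᶜ‖₂ ≤ ‖h restricted to T₀ᶜ‖₁ / √s. -/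
open Finset

theorem tail_l2_bound
    (d s : ℕ) (hs : 0 < s) (hd : 2 * s ≤ d)
    (h : Fin d → ℝ) (T₀ T₁ : Finset (Fin d))
    (hT₀ : T₀.card = s) (hT₁ : T₁.card = s) (hT₁sub : T₁ ⊆ T₀ᶜ)
    (hlargest : ∀ i ∈ T₁, ∀ j ∈ T₀ᶜ \ T₁, |h j| ≤ |h i|) :
    Real.sqrt (∑ i ∈ (T₀ ∪ T₁)ᶜ, (h i) ^ 2) ≤
      (∑ i ∈ T₀ᶜ, |h i|) / Real.sqrt s := by
  set S := ∑ i ∈ T₀ᶜ, |h i| with hSdef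
  have hS0 : 0 ≤ S := Finset.sum_nonneg fun i _ => abs_nonneg _
  have hs0 : (0:ℝ) < s := by exact_mod_cast hs
  have hcompl : (T₀ ∪ T₁)ᶜ = T₀ᶜ \ T₁ := by
    ext i; simp [Finset.mem_sdiff, Finset.mem_compl, Finset.mem_union]
  have hbound : ∀ i ∈ T₀ᶜ \ T₁, |h i| ≤ S / s := by
    intro i hi
    have h2 : (s : ℝ) * |h i| ≤ ∑ j ∈ T₁, |h j| := by
      calc (s:ℝ) * |h i| = ∑ _j ∈ T₁, |h i| := by
            rw [Finset.sum_const, hT₁, nsmul_eq_mul]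
        _ ≤ _ := Finset.sum_le_sum fun j hj => hlargest j hj i hi
    have h3 : ∑ j ∈ T₁, |h j| ≤ S :=
      Finset.sum_le_sum_of_subset_of_nonneg hT₁sub fun j _ _ => abs_nonneg _
    rw [le_div_iff₀ hs0]
    linarith
  have hsum : ∑ i ∈ (T₀ ∪ T₁)ᶜ, (h i) ^ 2 ≤ S ^ 2 / s := by
    rw [hcompl]
    calc ∑ i ∈ T₀ᶜ \ T₁, (h i) ^ 2 ≤ ∑ i ∈ T₀ᶜ \ T₁, (S / s) * |h i| := by
          apply Finset.sum_le_sum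
          intro i hi
          have h1 := hbound i hi
          have h2 : (h i) ^ 2 = |h i| * |h i| := by
            rw [← sq_abs]; ring
          rw [h2]
          exact mul_le_mul_of_nonneg_right h1 (abs_nonneg _)
      _ = (S / s) * ∑ i ∈ T₀ᶜ \ T₁, |h i| := by rw [Finset.mul_sum]
      _ ≤ (S / s) * S := by
          apply mul_le_mul_of_nonneg_left _ (by positivity)
          exact Finset.sum_le_sum_of_subset_of_nonneg (Finset.sdiff_subset)
            fun j _ _ => abs_nonneg _
      _ = S ^ 2 / s := by ring
  calc Real.sqrt (∑ i ∈ (T₀ ∪ T₁)ᶜ, (h i) ^ 2) ≤ Real.sqrt (S ^ 2 / s) :=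
        Real.sqrt_le_sqrt hsum
    _ = S / Real.sqrt s := by
        rw [Real.sqrt_div (sq_nonneg S), Real.sqrt_sq hS0]
end

section
/- Let x ∈ ℝᵈ, s ≤ d, and let T₀ be the support of the s largest-magnitude coordinates of x. Then every coordinate of x outside T₀ satisfies |x_i| ≤ ‖x restricted to the indices ranked s/2+1,…,s‖₁ · (2/s); consequently ‖x - x_s‖₂² ≤ (2/s)·‖x - x_{s/2}‖₁². -/
open Finset

theorem tail_coordinate_bound
    (d t : ℕ) (ht : 0 < t) (x : Fin d → ℝ)
    (T S : Finset (Fin d))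
    (hT : T.card = 2 * t) (hS : S.card = t) (hST : S ⊆ T)
    (hTtop : ∀ i ∈ T, ∀ j ∉ T, |x j| ≤ |x i|)
    (hStop : ∀ i ∈ S, ∀ j ∉ S, |x j| ≤ |x i|) :
    (∀ i ∉ T, |x i| ≤ (2 / (2 * t : ℝ)) * ∑ j ∈ T \ S, |x j|) ∧
      ∑ i ∈ Tᶜ, (x i) ^ 2 ≤ (2 / (2 * t : ℝ)) * (∑ i ∈ Sᶜ, |x i|) ^ 2 := by
  have htR : (0:ℝ) < t := by exact_mod_cast ht
  have hcard : (T \ S).card = t := by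
    rw [card_sdiff_of_subset hST, hT, hS]; omega
  have key : ∀ i ∉ T, |x i| ≤ (2 / (2 * t : ℝ)) * ∑ j ∈ T \ S, |x j| := by
    intro i hi
    have h1 : (t : ℝ) * |x i| ≤ ∑ j ∈ T \ S, |x j| := by
      calc (t : ℝ) * |x i| = ∑ _j ∈ T \ S, |x i| := by
            rw [Finset.sum_const, hcard, nsmul_eq_mul]
        _ ≤ ∑ j ∈ T \ S, |x j| := by
            apply Finset.sum_le_sum
            intro j hj
            exact hTtop j (mem_sdiff.mp hj).1 i hi
    have : (2 / (2 * t : ℝ)) = 1 / t := by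
      field_simp
    rw [this]
    rw [div_mul_eq_mul_div, le_div_iff₀ htR, one_mul, mul_comm]
    exact h1
  refine ⟨key, ?_⟩
  set c : ℝ := (2 / (2 * t : ℝ)) * ∑ j ∈ T \ S, |x j| with hc
  have hTsub : T \ S ⊆ Sᶜ := fun j hj => by
    simp [mem_compl, (mem_sdiff.mp hj).2]
  have hTcsub : Tᶜ ⊆ Sᶜ := fun j hj => by
    simp only [mem_compl] at *
    exact fun h => hj (hST h)
  have habs : ∀ (A : Finset (Fin d)), (0:ℝ) ≤ ∑ j ∈ A, |x j| :=
    fun A => Finset.sum_nonneg fun j _ => abs_nonneg _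
  have hmono : ∀ A ⊆ Sᶜ, ∑ j ∈ A, |x j| ≤ ∑ j ∈ Sᶜ, |x j| :=
    fun A hA => Finset.sum_le_sum_of_subset_of_nonneg hA (fun j _ _ => abs_nonneg _)
  calc ∑ i ∈ Tᶜ, (x i) ^ 2 ≤ ∑ i ∈ Tᶜ, c * |x i| := by
        apply Finset.sum_le_sum
        intro i hi
        have hi' : i ∉ T := mem_compl.mp hi
        calc (x i) ^ 2 = |x i| * |x i| := by rw [← sq_abs, pow_two]
          _ ≤ c * |x i| := mul_le_mul_of_nonneg_right (key i hi') (abs_nonneg _)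
    _ = c * ∑ i ∈ Tᶜ, |x i| := by rw [Finset.mul_sum]
    _ ≤ (2 / (2 * t : ℝ)) * (∑ i ∈ Sᶜ, |x i|) ^ 2 := by
        rw [hc, mul_assoc, pow_two]
        apply mul_le_mul_of_nonneg_left _ (by positivity)
        exact mul_le_mul (hmono _ hTsub) (hmono _ hTcsub) (habs _) (habs _)
end

section
/- Assume an m×d matrix Φ satisfies the restricted isometry property of order 2s with constant δ < √2 - 1. Let x be s-sparse, e ∈ ℝᵐ with ‖e‖₂ ≤ ε, u = Φx + e, and let μ = min over the support of x of |x_i| satisfy μ ≥ 4αε/(1-ρ), where ρ = √2δ/(1-δ) and α = 2√(1+δ)/(1-δ). Then the limiting approximation x̂ produced by iteratively reweighted ℓ1-minimization (with stability parameter a → 0) satisfies ‖x - x̂‖₂ ≤ 2αε / (1 + √(1 - 4αε/μ - 4αερ/μ)) ≤ 2αε/(1+ρ). -/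
open Finset Filter

/-- The restricted isometry property of order `k` with constant `δ`. -/
def RIP {m d : ℕ} (Φ : Matrix (Fin m) (Fin d) ℝ) (k : ℕ) (δ : ℝ) : Prop :=
  ∀ v : Fin d → ℝ, (Finset.univ.filter fun i => v i ≠ 0).card ≤ k →
    (1 - δ) * ∑ i, (v i) ^ 2 ≤ ∑ j, (Φ.mulVec v j) ^ 2 ∧
      ∑ j, (Φ.mulVec v j) ^ 2 ≤ (1 + δ) * ∑ i, (v i) ^ 2

namespace RW1

lemma sum_sq_nonneg {n : ℕ} (v : Fin n → ℝ) : 0 ≤ ∑ i, v i ^ 2 :=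
  Finset.sum_nonneg fun i _ => sq_nonneg _

lemma sqrt_sum_sq_nonneg {n : ℕ} (v : Fin n → ℝ) : 0 ≤ Real.sqrt (∑ i, v i ^ 2) :=
  Real.sqrt_nonneg _

lemma sq_sqrt_sum {n : ℕ} (v : Fin n → ℝ) :
    Real.sqrt (∑ i, v i ^ 2) ^ 2 = ∑ i, v i ^ 2 :=
  Real.sq_sqrt (sum_sq_nonneg v)

/-- discrete Cauchy–Schwarz -/
lemma cs_sum {n : ℕ} (f g : Fin n → ℝ) :
    ∑ i, f i * g i ≤ Real.sqrt (∑ i, f i ^ 2) * Real.sqrt (∑ i, g i ^ 2) := by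
  have h := Finset.sum_mul_sq_le_sq_mul_sq Finset.univ f g
  have h2 : ∑ i, f i * g i ≤ |∑ i, f i * g i| := le_abs_self _
  refine h2.trans ?_
  rw [← Real.sqrt_sq_eq_abs, ← Real.sqrt_mul (sum_sq_nonneg f)]
  exact Real.sqrt_le_sqrt h

/-- triangle inequality for raw sums -/
lemma sqrt_tri {n : ℕ} (f g : Fin n → ℝ) :
    Real.sqrt (∑ i, (f i + g i) ^ 2) ≤
      Real.sqrt (∑ i, f i ^ 2) + Real.sqrt (∑ i, g i ^ 2) := by
  have h1 : ∑ i, (f i + g i) ^ 2 ≤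
      (Real.sqrt (∑ i, f i ^ 2) + Real.sqrt (∑ i, g i ^ 2)) ^ 2 := by
    have hfg := cs_sum f g
    have hf := sq_sqrt_sum f
    have hg := sq_sqrt_sum g
    have heq : ∑ i, (f i + g i) ^ 2 = ∑ i, (f i ^ 2 + 2 * (f i * g i) + g i ^ 2) := by
      congr 1; ext i; ring
    rw [Finset.sum_add_distrib, Finset.sum_add_distrib, ← Finset.mul_sum] at heq
    rw [heq]; nlinarith
  calc Real.sqrt (∑ i, (f i + g i) ^ 2) ≤
      Real.sqrt ((Real.sqrt (∑ i, f i ^ 2) + Real.sqrt (∑ i, g i ^ 2)) ^ 2) :=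
        Real.sqrt_le_sqrt h1
    _ = _ := Real.sqrt_sq (by positivity)

lemma sqrt_tri_sub {n : ℕ} (f g : Fin n → ℝ) :
    Real.sqrt (∑ i, (f i - g i) ^ 2) ≤
      Real.sqrt (∑ i, f i ^ 2) + Real.sqrt (∑ i, g i ^ 2) := by
  have := sqrt_tri f (fun i => - g i)
  simpa [sub_eq_add_neg] using this

lemma coord_le_l2 {n : ℕ} (v : Fin n → ℝ) (i : Fin n) :
    |v i| ≤ Real.sqrt (∑ j, v j ^ 2) := by
  rw [← Real.sqrt_sq_eq_abs]
  exact Real.sqrt_le_sqrt (Finset.single_le_sum (fun j _ => sq_nonneg (v j)) (Finset.mem_univ i))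

/-- ℓ1 on a set of card ≤ s is ≤ √s · ℓ2 -/
lemma l1_le_sqrt_card_l2 {d : ℕ} (S : Finset (Fin d)) (s : ℕ) (hS : S.card ≤ s)
    (h : Fin d → ℝ) :
    ∑ i ∈ S, |h i| ≤ Real.sqrt s * Real.sqrt (∑ i ∈ S, h i ^ 2) := by
  have h1 : ∑ i ∈ S, |h i| * 1 ≤ Real.sqrt (∑ i ∈ S, |h i| ^ 2) * Real.sqrt (∑ i ∈ S, (1:ℝ) ^ 2) := by
    have hcs := Finset.sum_mul_sq_le_sq_mul_sq S (fun i => |h i|) (fun _ => (1:ℝ))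
    have h2 : ∑ i ∈ S, |h i| * 1 ≤ |∑ i ∈ S, |h i| * 1| := le_abs_self _
    refine h2.trans ?_
    rw [← Real.sqrt_sq_eq_abs, ← Real.sqrt_mul (Finset.sum_nonneg fun i _ => sq_nonneg _)]
    exact Real.sqrt_le_sqrt hcs
  simp only [mul_one, one_pow, Finset.sum_const, nsmul_eq_mul, mul_one] at h1
  have h3 : Real.sqrt (S.card : ℝ) ≤ Real.sqrt s := Real.sqrt_le_sqrt (by exact_mod_cast hS)
  have h4 : (∑ i ∈ S, |h i| ^ 2) = ∑ i ∈ S, h i ^ 2 := by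
    congr 1; ext i; exact sq_abs _
  rw [h4] at h1
  calc ∑ i ∈ S, |h i| ≤ Real.sqrt (∑ i ∈ S, h i ^ 2) * Real.sqrt (S.card) := h1
    _ ≤ Real.sqrt (∑ i ∈ S, h i ^ 2) * Real.sqrt s := by
        exact mul_le_mul_of_nonneg_left h3 (Real.sqrt_nonneg _)
    _ = _ := mul_comm _ _


/-- RIP definition copied (will be in main file) -/
def RIPd {m d : ℕ} (Φ : Matrix (Fin m) (Fin d) ℝ) (k : ℕ) (δ : ℝ) : Prop :=
  ∀ v : Fin d → ℝ, (Finset.univ.filter fun i => v i ≠ 0).card ≤ k →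
    (1 - δ) * ∑ i, (v i) ^ 2 ≤ ∑ j, (Φ.mulVec v j) ^ 2 ∧
      ∑ j, (Φ.mulVec v j) ^ 2 ≤ (1 + δ) * ∑ i, (v i) ^ 2

variable {m d : ℕ}

noncomputable def supp (v : Fin d → ℝ) : Finset (Fin d) := Finset.univ.filter fun i => v i ≠ 0

/-- polarization half of the RIP inner product bound -/
lemma rip_inner_half (Φ : Matrix (Fin m) (Fin d) ℝ) (s : ℕ) (δ : ℝ)
    (hRIP : RIPd Φ (2*s) δ)
    (f g : Fin d → ℝ) (hdisj : ∀ i, f i = 0 ∨ g i = 0)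
    (hcard : (supp f).card + (supp g).card ≤ 2*s) :
    ∑ j, Φ.mulVec f j * Φ.mulVec g j ≤ δ / 2 * (∑ i, f i ^ 2 + ∑ i, g i ^ 2) := by
  have hsupp_add : (supp (f + g)).card ≤ 2*s := by
    refine le_trans (Finset.card_le_card ?_) (le_trans (Finset.card_union_le _ _) hcard)
    intro i hi
    simp only [supp, Finset.mem_filter, Finset.mem_univ, true_and, Finset.mem_union,
      Pi.add_apply] at hi ⊢
    by_contra hcon
    push_neg at hcon
    simp [hcon.1, hcon.2] at hi
  have hsupp_sub : (supp (f - g)).card ≤ 2*s := by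
    refine le_trans (Finset.card_le_card ?_) (le_trans (Finset.card_union_le _ _) hcard)
    intro i hi
    simp only [supp, Finset.mem_filter, Finset.mem_univ, true_and, Finset.mem_union,
      Pi.sub_apply] at hi ⊢
    by_contra hcon
    push_neg at hcon
    simp [hcon.1, hcon.2] at hi
  have h1 := (hRIP (f + g) hsupp_add).2
  have h2 := (hRIP (f - g) hsupp_sub).1
  have hfg0 : ∑ i, f i * g i = 0 := by
    apply Finset.sum_eq_zero
    intro i _
    rcases hdisj i with h | h <;> simp [h]
  have hadd : ∑ i, (f + g) i ^ 2 = ∑ i, f i ^ 2 + ∑ i, g i ^ 2 := by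
    have : ∀ i, (f + g) i ^ 2 = f i ^ 2 + 2 * (f i * g i) + g i ^ 2 := by
      intro i; simp [Pi.add_apply]; ring
    simp only [this, Finset.sum_add_distrib, ← Finset.mul_sum, hfg0]
    ring
  have hsub : ∑ i, (f - g) i ^ 2 = ∑ i, f i ^ 2 + ∑ i, g i ^ 2 := by
    have : ∀ i, (f - g) i ^ 2 = f i ^ 2 - 2 * (f i * g i) + g i ^ 2 := by
      intro i; simp [Pi.sub_apply]; ring
    simp only [this, Finset.sum_add_distrib, Finset.sum_sub_distrib, ← Finset.mul_sum, hfg0]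
    ring
  have hmv_add : ∀ j, Φ.mulVec (f + g) j = Φ.mulVec f j + Φ.mulVec g j := by
    intro j; rw [Matrix.mulVec_add]; rfl
  have hmv_sub : ∀ j, Φ.mulVec (f - g) j = Φ.mulVec f j - Φ.mulVec g j := by
    intro j; rw [Matrix.mulVec_sub]; rfl
  have e1 : ∑ j, Φ.mulVec (f + g) j ^ 2
      = ∑ j, Φ.mulVec f j ^ 2 + 2 * ∑ j, Φ.mulVec f j * Φ.mulVec g j + ∑ j, Φ.mulVec g j ^ 2 := by
    have : ∀ j, Φ.mulVec (f + g) j ^ 2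
        = Φ.mulVec f j ^ 2 + 2 * (Φ.mulVec f j * Φ.mulVec g j) + Φ.mulVec g j ^ 2 := by
      intro j; rw [hmv_add]; ring
    simp only [this, Finset.sum_add_distrib, ← Finset.mul_sum]
  have e2 : ∑ j, Φ.mulVec (f - g) j ^ 2
      = ∑ j, Φ.mulVec f j ^ 2 - 2 * ∑ j, Φ.mulVec f j * Φ.mulVec g j + ∑ j, Φ.mulVec g j ^ 2 := by
    have : ∀ j, Φ.mulVec (f - g) j ^ 2
        = Φ.mulVec f j ^ 2 - 2 * (Φ.mulVec f j * Φ.mulVec g j) + Φ.mulVec g j ^ 2 := by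
      intro j; rw [hmv_sub]; ring
    simp only [this, Finset.sum_add_distrib, Finset.sum_sub_distrib, ← Finset.mul_sum]
  rw [hadd, e1] at h1
  rw [hsub, e2] at h2
  linarith


lemma supp_smul_le (c : ℝ) (f : Fin d → ℝ) : supp (fun i => c * f i) ⊆ supp f := by
  intro i hi
  simp only [supp, Finset.mem_filter, Finset.mem_univ, true_and] at hi ⊢
  intro h; exact hi (by rw [h, mul_zero])

lemma mulVec_smul' (Φ : Matrix (Fin m) (Fin d) ℝ) (c : ℝ) (f : Fin d → ℝ) (j : Fin m) :
    Φ.mulVec (fun i => c * f i) j = c * Φ.mulVec f j := by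
  simp only [Matrix.mulVec, dotProduct, Finset.mul_sum]
  congr 1; ext i; ring

/-- the RIP inner product bound -/
lemma rip_inner (Φ : Matrix (Fin m) (Fin d) ℝ) (s : ℕ) (δ : ℝ) (hδ0 : 0 < δ)
    (hRIP : RIPd Φ (2*s) δ)
    (f g : Fin d → ℝ) (hdisj : ∀ i, f i = 0 ∨ g i = 0)
    (hcard : (supp f).card + (supp g).card ≤ 2*s) :
    |∑ j, Φ.mulVec f j * Φ.mulVec g j| ≤
      δ * Real.sqrt (∑ i, f i ^ 2) * Real.sqrt (∑ i, g i ^ 2) := by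
  set F := ∑ i, f i ^ 2 with hF
  set G := ∑ i, g i ^ 2 with hG
  have hF0 : 0 ≤ F := sum_sq_nonneg f
  have hG0 : 0 ≤ G := sum_sq_nonneg g
  -- degenerate cases
  by_cases hFz : F = 0
  · have hfz : ∀ i, f i = 0 := by
      intro i
      have h2 := (Finset.sum_eq_zero_iff_of_nonneg (fun i _ => sq_nonneg (f i))).1 hFz i (Finset.mem_univ i)
      exact pow_eq_zero_iff (two_ne_zero) |>.1 h2
    have : ∀ j, Φ.mulVec f j = 0 := by
      intro j
      simp only [Matrix.mulVec, dotProduct]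
      exact Finset.sum_eq_zero fun i _ => by rw [hfz i, mul_zero]
    simp only [this, zero_mul, Finset.sum_const_zero, abs_zero]
    positivity
  by_cases hGz : G = 0
  · have hgz : ∀ i, g i = 0 := by
      intro i
      have h2 := (Finset.sum_eq_zero_iff_of_nonneg (fun i _ => sq_nonneg (g i))).1 hGz i (Finset.mem_univ i)
      exact pow_eq_zero_iff (two_ne_zero) |>.1 h2
    have : ∀ j, Φ.mulVec g j = 0 := by
      intro j
      simp only [Matrix.mulVec, dotProduct]
      exact Finset.sum_eq_zero fun i _ => by rw [hgz i, mul_zero]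
    simp only [this, mul_zero, Finset.sum_const_zero, abs_zero]
    positivity
  have hFpos : 0 < F := lt_of_le_of_ne hF0 (Ne.symm hFz)
  have hGpos : 0 < G := lt_of_le_of_ne hG0 (Ne.symm hGz)
  have hsF : 0 < Real.sqrt F := Real.sqrt_pos.2 hFpos
  have hsG : 0 < Real.sqrt G := Real.sqrt_pos.2 hGpos
  -- scaling constant
  set c : ℝ := Real.sqrt (Real.sqrt G / Real.sqrt F) with hc
  have hcpos : 0 < c := Real.sqrt_pos.2 (div_pos hsG hsF)
  have hc2 : c ^ 2 = Real.sqrt G / Real.sqrt F := Real.sq_sqrt (le_of_lt (div_pos hsG hsF))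
  -- apply polarization to (c f, c⁻¹ g) and (-c f, c⁻¹ g)
  have key : ∀ σ : ℝ, σ = 1 ∨ σ = -1 →
      ∑ j, Φ.mulVec (fun i => σ * c * f i) j * Φ.mulVec (fun i => c⁻¹ * g i) j ≤
        δ / 2 * (∑ i, (σ * c * f i) ^ 2 + ∑ i, (c⁻¹ * g i) ^ 2) := by
    intro σ hσ
    apply rip_inner_half Φ s δ hRIP
    · intro i
      rcases hdisj i with h | h
      · left; rw [h, mul_zero]
      · right; rw [h, mul_zero]
    · calc (supp fun i => σ * c * f i).card + (supp fun i => c⁻¹ * g i).card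
          ≤ (supp f).card + (supp g).card :=
            add_le_add (Finset.card_le_card (supp_smul_le _ f)) (Finset.card_le_card (supp_smul_le _ g))
        _ ≤ 2 * s := hcard
  have scaled_sum : ∀ σ : ℝ,
      ∑ j, Φ.mulVec (fun i => σ * c * f i) j * Φ.mulVec (fun i => c⁻¹ * g i) j
        = σ * ∑ j, Φ.mulVec f j * Φ.mulVec g j := by
    intro σ
    rw [Finset.mul_sum]
    congr 1; ext j
    rw [mulVec_smul' Φ (σ * c) f j, mulVec_smul' Φ c⁻¹ g j]
    field_simp
  have sumf : ∀ σ : ℝ, σ = 1 ∨ σ = -1 → ∑ i, (σ * c * f i) ^ 2 = c ^ 2 * F := by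
    intro σ hσ
    rw [hF, Finset.mul_sum]
    congr 1; ext i
    rcases hσ with h | h <;> rw [h] <;> ring
  have sumg : ∑ i, (c⁻¹ * g i) ^ 2 = c⁻¹ ^ 2 * G := by
    rw [hG, Finset.mul_sum]
    congr 1; ext i; ring
  have hbound : c ^ 2 * F + c⁻¹ ^ 2 * G = 2 * Real.sqrt F * Real.sqrt G := by
    have hF' : Real.sqrt F ^ 2 = F := Real.sq_sqrt hF0
    have hG' : Real.sqrt G ^ 2 = G := Real.sq_sqrt hG0
    have hcinv : c⁻¹ ^ 2 = Real.sqrt F / Real.sqrt G := by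
      rw [inv_pow, hc2, inv_div]
    rw [hc2, hcinv]
    field_simp
    nlinarith
  have h1 := key 1 (Or.inl rfl)
  have h2 := key (-1) (Or.inr rfl)
  rw [scaled_sum 1, sumf 1 (Or.inl rfl), sumg, hbound] at h1
  rw [scaled_sum (-1), sumf (-1) (Or.inr rfl), sumg, hbound] at h2
  rw [abs_le]
  constructor <;> nlinarith


/-- Sorted block decomposition of `Tᶜ` into blocks of size ≤ s, in decreasing
order of `|h|`. -/
lemma block_decomp {d : ℕ} (s : ℕ) (hs : 0 < s) (T : Finset (Fin d)) (h : Fin d → ℝ) :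
    ∃ (n : ℕ) (B : ℕ → Finset (Fin d)),
      (∀ j, B j ⊆ Tᶜ) ∧
      (∀ j j', j ≠ j' → Disjoint (B j) (B j')) ∧
      (∀ j, (B j).card ≤ s) ∧
      ((T ∪ B 0)ᶜ = (Finset.Ico 1 n).biUnion B) ∧
      (∀ j, 1 ≤ j → Real.sqrt (∑ i ∈ B j, h i ^ 2) ≤
          (Real.sqrt s)⁻¹ * ∑ i ∈ B (j-1), |h i|) ∧
      (∑ j ∈ Finset.Ico 1 n, ∑ i ∈ B (j-1), |h i| ≤ ∑ i ∈ Tᶜ, |h i|) := by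
  classical
  set n := (Tᶜ : Finset (Fin d)).card with hn
  set e := (Tᶜ : Finset (Fin d)).equivFin with he
  set f0 : Fin n → ℝ := fun p => -|h ((e.symm p) : Fin d)| with hf0
  set σ := Tuple.sort f0 with hσ
  set g : Fin n → Fin d := fun p => ((e.symm (σ p)) : Fin d) with hg
  have hganti : ∀ p q : Fin n, p ≤ q → |h (g q)| ≤ |h (g p)| := by
    intro p q hpq
    have hm := Tuple.monotone_sort f0 hpq
    simp only [Function.comp, hf0] at hm
    simpa [hg] using neg_le_neg_iff.mp hm
  have hginj : Function.Injective g := by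
    intro p q hpq
    have h1 : e.symm (σ p) = e.symm (σ q) := Subtype.ext hpq
    exact σ.injective (e.symm.injective h1)
  have hgmem : ∀ p, g p ∈ Tᶜ := fun p => (e.symm (σ p)).2
  have hgsurj : ∀ i ∈ Tᶜ, ∃ p, g p = i := by
    intro i hi
    refine ⟨σ.symm (e ⟨i, hi⟩), ?_⟩
    simp [hg]
  set P : ℕ → Finset (Fin n) :=
    fun j => Finset.univ.filter fun p : Fin n => j*s ≤ (p:ℕ) ∧ (p:ℕ) < j*s+s with hP
  set B : ℕ → Finset (Fin d) := fun j => (P j).image g with hB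
  have hmemP : ∀ (j) (p : Fin n), p ∈ P j ↔ j*s ≤ (p:ℕ) ∧ (p:ℕ) < j*s+s := by
    intro j p; simp [hP]
  have hPdisj : ∀ j j', j ≠ j' → Disjoint (P j) (P j') := by
    intro j j' hne
    rw [Finset.disjoint_left]
    intro p hp hp'
    rw [hmemP] at hp hp'
    rcases Nat.lt_or_ge j j' with hlt | hge
    · have : j*s + s ≤ j'*s := by
        have : (j+1)*s ≤ j'*s := Nat.mul_le_mul_right s hlt
        linarith [this, Nat.succ_mul j s]
      omega
    · have hlt : j' < j := lt_of_le_of_ne hge (Ne.symm hne)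
      have : j'*s + s ≤ j*s := by
        have : (j'+1)*s ≤ j*s := Nat.mul_le_mul_right s hlt
        linarith [this, Nat.succ_mul j' s]
      omega
  have hBdisj : ∀ j j', j ≠ j' → Disjoint (B j) (B j') := by
    intro j j' hne
    rw [hB, Finset.disjoint_image hginj]
    exact hPdisj j j' hne
  have hBsub : ∀ j, B j ⊆ Tᶜ := by
    intro j i hi
    rw [hB, Finset.mem_image] at hi
    obtain ⟨p, _, rfl⟩ := hi
    exact hgmem p
  have hPval : ∀ j, (P j).image Fin.val ⊆ Finset.Ico (j*s) (j*s+s) := by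
    intro j q hq
    rw [Finset.mem_image] at hq
    obtain ⟨p, hp, rfl⟩ := hq
    rw [hmemP] at hp
    exact Finset.mem_Ico.2 hp
  have hPcard : ∀ j, (P j).card ≤ s := by
    intro j
    have h1 : (P j).card = ((P j).image Fin.val).card :=
      (Finset.card_image_of_injective _ Fin.val_injective).symm
    rw [h1]
    calc ((P j).image Fin.val).card ≤ (Finset.Ico (j*s) (j*s+s)).card :=
          Finset.card_le_card (hPval j)
      _ = s := by rw [Nat.card_Ico]; omega
  have hPcard_eq : ∀ j, j*s + s ≤ n → (P j).card = s := by
    intro j hj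
    have h1 : (P j).card = ((P j).image Fin.val).card :=
      (Finset.card_image_of_injective _ Fin.val_injective).symm
    have h2 : (P j).image Fin.val = Finset.Ico (j*s) (j*s+s) := by
      refine Finset.Subset.antisymm (hPval j) ?_
      intro q hq
      rw [Finset.mem_Ico] at hq
      have hqn : q < n := lt_of_lt_of_le hq.2 hj
      rw [Finset.mem_image]
      exact ⟨⟨q, hqn⟩, (hmemP j ⟨q, hqn⟩).2 hq, rfl⟩
    rw [h1, h2, Nat.card_Ico]
    omega
  -- key per-element bound
  have hC1 : ∀ j, 1 ≤ j → ∀ p ∈ P j, (s:ℝ) * |h (g p)| ≤ ∑ q ∈ P (j-1), |h (g q)| := by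
    intro j hj p hp
    rw [hmemP] at hp
    have hjs : (j-1)*s + s = j*s := by
      have hj1 : j - 1 + 1 = j := by omega
      calc (j-1)*s + s = (j-1+1)*s := by rw [Nat.add_mul, one_mul]
        _ = j*s := by rw [hj1]
    have hjn : (j-1)*s + s ≤ n := by
      rw [hjs]
      exact le_trans hp.1 p.2.le
    have hcard : (P (j-1)).card = s := hPcard_eq (j-1) hjn
    have hle : ∀ q ∈ P (j-1), |h (g p)| ≤ |h (g q)| := by
      intro q hq
      rw [hmemP] at hq
      apply hganti
      have : (q:ℕ) < j*s := by omega
      have : (q:ℕ) ≤ (p:ℕ) := le_trans this.le hp.1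
      exact this
    calc (s:ℝ) * |h (g p)| = (P (j-1)).card • |h (g p)| := by
          rw [hcard, nsmul_eq_mul]
      _ = ∑ _q ∈ P (j-1), |h (g p)| := (Finset.sum_const _).symm
      _ ≤ ∑ q ∈ P (j-1), |h (g q)| := Finset.sum_le_sum hle
  -- block ℓ2 bound
  have hblock : ∀ j, 1 ≤ j → Real.sqrt (∑ i ∈ B j, h i ^ 2) ≤
      (Real.sqrt s)⁻¹ * ∑ i ∈ B (j-1), |h i| := by
    intro j hj
    have hsum1 : ∑ i ∈ B j, h i ^ 2 = ∑ p ∈ P j, h (g p) ^ 2 :=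
      Finset.sum_image (fun p _ q _ hpq => hginj hpq)
    have hsum2 : ∑ i ∈ B (j-1), |h i| = ∑ q ∈ P (j-1), |h (g q)| :=
      Finset.sum_image (fun p _ q _ hpq => hginj hpq)
    set M : ℝ := (s:ℝ)⁻¹ * ∑ q ∈ P (j-1), |h (g q)| with hM
    have hM0 : 0 ≤ M := by
      apply mul_nonneg (by positivity)
      exact Finset.sum_nonneg fun q _ => abs_nonneg _
    have hterm : ∀ p ∈ P j, h (g p) ^ 2 ≤ M ^ 2 := by
      intro p hp
      have h1 := hC1 j hj p hp
      have hspos : (0:ℝ) < s := by exact_mod_cast hs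
      have h2 : |h (g p)| ≤ M := by
        rw [hM, inv_mul_eq_div, le_div_iff₀ hspos]
        linarith [h1]
      calc h (g p) ^ 2 = |h (g p)| ^ 2 := (sq_abs _).symm
        _ ≤ M ^ 2 := by nlinarith [abs_nonneg (h (g p))]
    have hsumle : ∑ p ∈ P j, h (g p) ^ 2 ≤ (s:ℝ) * M ^ 2 := by
      calc ∑ p ∈ P j, h (g p) ^ 2 ≤ ∑ _p ∈ P j, M ^ 2 := Finset.sum_le_sum hterm
        _ = (P j).card • M ^ 2 := Finset.sum_const _
        _ ≤ (s:ℝ) * M ^ 2 := by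
            rw [nsmul_eq_mul]
            apply mul_le_mul_of_nonneg_right _ (sq_nonneg M)
            exact_mod_cast hPcard j
    rw [hsum1, hsum2]
    have hspos : (0:ℝ) < s := by exact_mod_cast hs
    calc Real.sqrt (∑ p ∈ P j, h (g p) ^ 2) ≤ Real.sqrt ((s:ℝ) * M ^ 2) :=
          Real.sqrt_le_sqrt hsumle
      _ = Real.sqrt s * M := by
          rw [Real.sqrt_mul (le_of_lt hspos), Real.sqrt_sq hM0]
      _ = (Real.sqrt s)⁻¹ * ∑ q ∈ P (j-1), |h (g q)| := by
          have hss : Real.sqrt s * Real.sqrt s = (s:ℝ) := Real.mul_self_sqrt (le_of_lt hspos)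
          have hsqrtpos : (0:ℝ) < Real.sqrt s := Real.sqrt_pos.2 hspos
          have hkey : Real.sqrt s * (s:ℝ)⁻¹ = (Real.sqrt s)⁻¹ := by
            field_simp [ne_of_gt hspos, ne_of_gt hsqrtpos]
            exact Real.sq_sqrt hspos.le
          rw [hM, ← mul_assoc, hkey]
  -- covering
  have hcov : (T ∪ B 0)ᶜ = (Finset.Ico 1 n).biUnion B := by
    ext i
    simp only [Finset.mem_compl, Finset.mem_union, Finset.mem_biUnion, Finset.mem_Ico]
    constructor
    · intro hi
      push_neg at hi
      have hiTc : i ∈ Tᶜ := Finset.mem_compl.2 hi.1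
      obtain ⟨p, rfl⟩ := hgsurj i hiTc
      set j₀ := (p:ℕ) / s with hj₀
      have hdm : s * ((p:ℕ) / s) + (p:ℕ) % s = (p:ℕ) := Nat.div_add_mod _ _
      have hmlt : (p:ℕ) % s < s := Nat.mod_lt _ hs
      have hb1 : j₀ * s ≤ (p:ℕ) := by
        rw [hj₀, mul_comm]; omega
      have hb2 : (p:ℕ) < j₀ * s + s := by
        rw [hj₀, mul_comm]; omega
      have hpmem : p ∈ P j₀ := (hmemP j₀ p).2 ⟨hb1, hb2⟩
      have hj₀1 : 1 ≤ j₀ := by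
        by_contra hcon
        push_neg at hcon
        interval_cases j₀
        exact hi.2 (Finset.mem_image.2 ⟨p, hpmem, rfl⟩)
      have hj₀n : j₀ < n := lt_of_le_of_lt (Nat.div_le_self _ _) p.2
      exact ⟨j₀, ⟨hj₀1, hj₀n⟩, Finset.mem_image.2 ⟨p, hpmem, rfl⟩⟩
    · rintro ⟨j, ⟨hj1, _⟩, hij⟩
      push_neg
      constructor
      · have := hBsub j hij
        exact Finset.mem_compl.1 this
      · intro hi0
        have hd := hBdisj j 0 (by omega)
        exact Finset.disjoint_left.1 hd hij hi0
  -- total ℓ1 bound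
  have htotal : ∑ j ∈ Finset.Ico 1 n, ∑ i ∈ B (j-1), |h i| ≤ ∑ i ∈ Tᶜ, |h i| := by
    rw [Finset.sum_Ico_eq_sum_range]
    simp only [Nat.add_sub_cancel_left]
    have h1 : ∀ (F : Finset ℕ), ∑ j ∈ F, ∑ i ∈ B j, |h i| = ∑ i ∈ F.biUnion B, |h i| := by
      intro F
      rw [Finset.sum_biUnion]
      intro j hj j' hj' hne
      exact hBdisj j j' hne
    rw [h1 (Finset.range (n-1))]
    apply Finset.sum_le_sum_of_subset_of_nonneg
    · intro i hi
      rw [Finset.mem_biUnion] at hi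
      obtain ⟨j, _, hij⟩ := hi
      exact hBsub j hij
    · intro i _ _
      exact abs_nonneg _
  exact ⟨n, B, hBsub, hBdisj, fun j => le_trans (Finset.card_image_le) (hPcard j),
    hcov, hblock, htotal⟩


lemma sum_ite_sq {d : ℕ} (S : Finset (Fin d)) (h : Fin d → ℝ) :
    ∑ i, (if i ∈ S then h i else 0) ^ 2 = ∑ i ∈ S, h i ^ 2 := by
  have hterm : ∀ i, (if i ∈ S then h i else 0) ^ 2 = if i ∈ S then h i ^ 2 else 0 := by
    intro i; split <;> simp
  simp only [hterm]
  rw [Finset.sum_ite_mem Finset.univ S (fun i => h i ^ 2), Finset.univ_inter]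

lemma supp_ite {d : ℕ} (S : Finset (Fin d)) (h : Fin d → ℝ) :
    supp (fun i => if i ∈ S then h i else 0) ⊆ S := by
  intro i hi
  simp only [supp, Finset.mem_filter, Finset.mem_univ, true_and] at hi
  by_contra hcon
  simp [hcon] at hi

lemma sqrt_sum_le {β : Type*} (F : Finset β) (c : β → ℝ) (hc : ∀ j ∈ F, 0 ≤ c j) :
    Real.sqrt (∑ j ∈ F, c j) ≤ ∑ j ∈ F, Real.sqrt (c j) := by
  have h1 : ∑ j ∈ F, c j ≤ (∑ j ∈ F, Real.sqrt (c j)) ^ 2 := by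
    calc ∑ j ∈ F, c j = ∑ j ∈ F, Real.sqrt (c j) ^ 2 := by
          apply Finset.sum_congr rfl
          intro j hj
          rw [Real.sq_sqrt (hc j hj)]
      _ ≤ (∑ j ∈ F, Real.sqrt (c j)) ^ 2 :=
          Finset.sum_sq_le_sq_sum_of_nonneg fun j _ => Real.sqrt_nonneg _
  calc Real.sqrt (∑ j ∈ F, c j) ≤ Real.sqrt ((∑ j ∈ F, Real.sqrt (c j)) ^ 2) :=
        Real.sqrt_le_sqrt h1
    _ = ∑ j ∈ F, Real.sqrt (c j) :=
        Real.sqrt_sq (Finset.sum_nonneg fun j _ => Real.sqrt_nonneg _)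

lemma mulVec_finsum {m d : ℕ} (Φ : Matrix (Fin m) (Fin d) ℝ) {β : Type*} (F : Finset β)
    (v : β → Fin d → ℝ) :
    Φ.mulVec (∑ j ∈ F, v j) = ∑ j ∈ F, Φ.mulVec (v j) := by
  ext j
  rw [Finset.sum_apply]
  simp only [Matrix.mulVec, dotProduct, Finset.sum_apply, Finset.mul_sum]
  rw [Finset.sum_comm]


set_option maxHeartbeats 1000000 in
/-- The single-step error bound for (weighted) ℓ1 minimization under RIP. -/
lemma step {m d : ℕ} (s : ℕ) (hs : 0 < s) (Φ : Matrix (Fin m) (Fin d) ℝ) (δ : ℝ)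
    (hδ0 : 0 < δ) (hδ1 : δ < 1)
    (hRIP : RIPd Φ (2*s) δ) (ρ α : ℝ)
    (hρ : ρ = Real.sqrt 2 * δ / (1-δ)) (hα : α = 2 * Real.sqrt (1+δ) / (1-δ))
    (T : Finset (Fin d)) (hT : T.card ≤ s) (h : Fin d → ℝ) (γ ε : ℝ)
    (hγ0 : 0 ≤ γ) (hργ : ρ * γ < 1) (hε : 0 ≤ ε)
    (cone : ∑ i ∈ Tᶜ, |h i| ≤ γ * ∑ i ∈ T, |h i|)
    (tube : Real.sqrt (∑ j, (Φ.mulVec h j)^2) ≤ 2*ε) :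
    Real.sqrt (∑ i, h i ^2) ≤ Real.sqrt (1+γ^2) * α * ε / (1 - ρ*γ) := by
  classical
  obtain ⟨n, B, hBsub, hBdisj, hBcard, hcov, hblock, htotal⟩ := block_decomp s hs T h
  set R : Finset (Fin d) → (Fin d → ℝ) := fun S => fun i => if i ∈ S then h i else 0 with hR
  set T01 := T ∪ B 0 with hT01
  set N1 := ∑ i ∈ T01, h i ^ 2 with hN1
  have hN10 : 0 ≤ N1 := Finset.sum_nonneg fun i _ => sq_nonneg _
  set S1 := Real.sqrt N1 with hS1
  have hS10 : 0 ≤ S1 := Real.sqrt_nonneg _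
  have hS1sq : S1 ^ 2 = N1 := Real.sq_sqrt hN10
  have hδ1' : (0:ℝ) < 1 - δ := by linarith
  have hTB0 : Disjoint T (B 0) := by
    rw [Finset.disjoint_left]
    intro i hiT hiB
    exact absurd hiT (Finset.mem_compl.1 (hBsub 0 hiB))
  -- sum over R S squared
  have hRsq : ∀ S : Finset (Fin d), ∑ i, (R S) i ^ 2 = ∑ i ∈ S, h i ^ 2 := by
    intro S; exact sum_ite_sq S h
  have hsuppR : ∀ S : Finset (Fin d), (supp (R S)).card ≤ S.card := by
    intro S; exact Finset.card_le_card (supp_ite S h)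
  have hcard01 : T01.card ≤ 2 * s := by
    calc T01.card ≤ T.card + (B 0).card := Finset.card_union_le _ _
      _ ≤ s + s := add_le_add hT (hBcard 0)
      _ = 2 * s := by ring
  -- RIP bounds on R T01
  have hRIPlow : (1-δ) * N1 ≤ ∑ j, (Φ.mulVec (R T01) j) ^ 2 := by
    have := (hRIP (R T01) (le_trans (hsuppR T01) hcard01)).1
    rwa [hRsq T01] at this
  have hRIPup : ∑ j, (Φ.mulVec (R T01) j) ^ 2 ≤ (1+δ) * N1 := by
    have := (hRIP (R T01) (le_trans (hsuppR T01) hcard01)).2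
    rwa [hRsq T01] at this
  -- ℓ1 bounds
  have hL1T : ∑ i ∈ T, |h i| ≤ Real.sqrt s * S1 := by
    refine le_trans (l1_le_sqrt_card_l2 T s hT h) ?_
    apply mul_le_mul_of_nonneg_left _ (Real.sqrt_nonneg _)
    apply Real.sqrt_le_sqrt
    apply Finset.sum_le_sum_of_subset_of_nonneg Finset.subset_union_left
    intro i _ _; exact sq_nonneg _
  have hL1c : ∑ i ∈ Tᶜ, |h i| ≤ γ * (Real.sqrt s * S1) :=
    le_trans cone (mul_le_mul_of_nonneg_left hL1T hγ0)
  have hL1c0 : 0 ≤ ∑ i ∈ Tᶜ, |h i| := Finset.sum_nonneg fun i _ => abs_nonneg _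
  -- decomposition h = R T01 + R T01ᶜ
  have hsplit : ∀ i, h i = (R T01) i + (R T01ᶜ) i := by
    intro i
    by_cases hi : i ∈ T01 <;> simp [hR, hi]
  have hmulh : ∀ j, Φ.mulVec h j = Φ.mulVec (R T01) j + Φ.mulVec (R T01ᶜ) j := by
    intro j
    have : h = (R T01) + (R T01ᶜ) := funext hsplit
    rw [this, Matrix.mulVec_add]
    rfl
  set CR := ∑ j, Φ.mulVec (R T01) j * Φ.mulVec (R T01ᶜ) j with hCR
  have hiden : ∑ j, (Φ.mulVec (R T01) j) ^ 2
      = ∑ j, Φ.mulVec (R T01) j * Φ.mulVec h j - CR := by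
    rw [hCR, ← Finset.sum_sub_distrib]
    apply Finset.sum_congr rfl
    intro j _
    rw [hmulh j]
    ring
  -- bound on the tube term
  have hQup : Real.sqrt (∑ j, (Φ.mulVec (R T01) j) ^ 2) ≤ Real.sqrt (1+δ) * S1 := by
    calc Real.sqrt (∑ j, (Φ.mulVec (R T01) j) ^ 2) ≤ Real.sqrt ((1+δ) * N1) :=
          Real.sqrt_le_sqrt hRIPup
      _ = Real.sqrt (1+δ) * S1 := by rw [Real.sqrt_mul (by linarith)]
  have hbound1 : ∑ j, Φ.mulVec (R T01) j * Φ.mulVec h j ≤ Real.sqrt (1+δ) * S1 * (2*ε) := by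
    refine le_trans (cs_sum _ _) ?_
    apply mul_le_mul hQup tube (Real.sqrt_nonneg _)
    positivity
  -- rest decomposition into blocks
  have hrest : R T01ᶜ = ∑ j ∈ Finset.Ico 1 n, R (B j) := by
    funext i
    rw [Finset.sum_apply]
    by_cases hi : i ∈ T01
    · have h0 : (R T01ᶜ) i = 0 := by simp [hR, hi]
      rw [h0]
      symm
      apply Finset.sum_eq_zero
      intro j hj
      have : i ∉ B j := by
        intro hmem
        have : i ∈ (Finset.Ico 1 n).biUnion B := Finset.mem_biUnion.2 ⟨j, hj, hmem⟩
        rw [← hcov] at this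
        exact absurd hi (Finset.mem_compl.1 this)
      simp [hR, this]
    · have h0 : (R T01ᶜ) i = h i := by simp [hR, hi]
      rw [h0]
      have hiU : i ∈ (Finset.Ico 1 n).biUnion B := by
        rw [← hcov]; exact Finset.mem_compl.2 hi
      obtain ⟨j₀, hj₀, hij₀⟩ := Finset.mem_biUnion.1 hiU
      symm
      rw [Finset.sum_eq_single_of_mem j₀ hj₀ (fun j _ hne => by
        have hnot : i ∉ B j := fun hmem =>
          Finset.disjoint_left.1 (hBdisj j j₀ hne) hmem hij₀
        simp [hR, hnot])]
      simp [hR, hij₀]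
  -- cross term as a sum over blocks
  have hCRsum : CR = ∑ j ∈ Finset.Ico 1 n, ∑ j', Φ.mulVec (R T01) j' * Φ.mulVec (R (B j)) j' := by
    rw [hCR, hrest, mulVec_finsum]
    simp only [Finset.sum_apply, Finset.mul_sum]
    exact Finset.sum_comm
  -- split R T01 = R T + R (B 0)
  have hR01split : R T01 = R T + R (B 0) := by
    funext i
    by_cases hiT : i ∈ T
    · have hiB : i ∉ B 0 := Finset.disjoint_left.1 hTB0 hiT
      simp [hR, hT01, hiT, hiB, Finset.mem_union]
    · by_cases hiB : i ∈ B 0 <;> simp [hR, hT01, hiT, hiB, Finset.mem_union]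
  set aT := ∑ i ∈ T, h i ^ 2 with haT
  set aB := ∑ i ∈ B 0, h i ^ 2 with haB
  have haT0 : 0 ≤ aT := Finset.sum_nonneg fun i _ => sq_nonneg _
  have haB0 : 0 ≤ aB := Finset.sum_nonneg fun i _ => sq_nonneg _
  have haTB : aT + aB = N1 := by
    rw [haT, haB, hN1, hT01, Finset.sum_union hTB0]
  have hsqrt2 : Real.sqrt aT + Real.sqrt aB ≤ Real.sqrt 2 * S1 := by
    have h2 : (Real.sqrt aT + Real.sqrt aB) ^ 2 ≤ 2 * N1 := by
      nlinarith [sq_nonneg (Real.sqrt aT - Real.sqrt aB), Real.sq_sqrt haT0, Real.sq_sqrt haB0]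
    calc Real.sqrt aT + Real.sqrt aB
        = Real.sqrt ((Real.sqrt aT + Real.sqrt aB) ^ 2) := (Real.sqrt_sq (by positivity)).symm
      _ ≤ Real.sqrt (2 * N1) := Real.sqrt_le_sqrt h2
      _ = Real.sqrt 2 * S1 := Real.sqrt_mul (by norm_num) N1
  -- per-block cross bound
  have hper : ∀ j ∈ Finset.Ico 1 n, |∑ j', Φ.mulVec (R T01) j' * Φ.mulVec (R (B j)) j'|
      ≤ δ * (Real.sqrt 2 * S1) * Real.sqrt (∑ i ∈ B j, h i ^ 2) := by
    intro j hj
    obtain ⟨hj1, hjn⟩ := Finset.mem_Ico.1 hj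
    have heq : ∑ j', Φ.mulVec (R T01) j' * Φ.mulVec (R (B j)) j'
        = (∑ j', Φ.mulVec (R T) j' * Φ.mulVec (R (B j)) j')
          + ∑ j', Φ.mulVec (R (B 0)) j' * Φ.mulVec (R (B j)) j' := by
      rw [← Finset.sum_add_distrib]
      apply Finset.sum_congr rfl
      intro j' _
      rw [hR01split, Matrix.mulVec_add]
      show (Φ.mulVec (R T) + Φ.mulVec (R (B 0))) j' * _ = _
      rw [Pi.add_apply]
      ring
    have hI1 : |∑ j', Φ.mulVec (R T) j' * Φ.mulVec (R (B j)) j'|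
        ≤ δ * Real.sqrt aT * Real.sqrt (∑ i ∈ B j, h i ^ 2) := by
      have hd : ∀ i, (R T) i = 0 ∨ (R (B j)) i = 0 := by
        intro i
        by_cases hiT : i ∈ T
        · right
          have hnot : i ∉ B j := fun hmem => (Finset.mem_compl.1 (hBsub j hmem)) hiT
          simp [hR, hnot]
        · left; simp [hR, hiT]
      have hc : (supp (R T)).card + (supp (R (B j))).card ≤ 2*s := by
        have := add_le_add (le_trans (hsuppR T) hT) (le_trans (hsuppR (B j)) (hBcard j))
        omega
      have := rip_inner Φ s δ hδ0 hRIP (R T) (R (B j)) hd hc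
      rwa [hRsq T, hRsq (B j)] at this
    have hI0 : |∑ j', Φ.mulVec (R (B 0)) j' * Φ.mulVec (R (B j)) j'|
        ≤ δ * Real.sqrt aB * Real.sqrt (∑ i ∈ B j, h i ^ 2) := by
      have hd : ∀ i, (R (B 0)) i = 0 ∨ (R (B j)) i = 0 := by
        intro i
        by_cases hiB : i ∈ B 0
        · right
          have hnot : i ∉ B j := fun hmem =>
            Finset.disjoint_left.1 (hBdisj 0 j (by omega)) hiB hmem
          simp [hR, hnot]
        · left; simp [hR, hiB]
      have hc : (supp (R (B 0))).card + (supp (R (B j))).card ≤ 2*s := by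
        have := add_le_add (le_trans (hsuppR (B 0)) (hBcard 0)) (le_trans (hsuppR (B j)) (hBcard j))
        omega
      have := rip_inner Φ s δ hδ0 hRIP (R (B 0)) (R (B j)) hd hc
      rwa [hRsq (B 0), hRsq (B j)] at this
    calc |∑ j', Φ.mulVec (R T01) j' * Φ.mulVec (R (B j)) j'|
        ≤ |∑ j', Φ.mulVec (R T) j' * Φ.mulVec (R (B j)) j'|
          + |∑ j', Φ.mulVec (R (B 0)) j' * Φ.mulVec (R (B j)) j'| := by
          rw [heq]; exact abs_add_le _ _
      _ ≤ δ * Real.sqrt aT * Real.sqrt (∑ i ∈ B j, h i ^ 2)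
          + δ * Real.sqrt aB * Real.sqrt (∑ i ∈ B j, h i ^ 2) := add_le_add hI1 hI0
      _ = δ * (Real.sqrt aT + Real.sqrt aB) * Real.sqrt (∑ i ∈ B j, h i ^ 2) := by ring
      _ ≤ δ * (Real.sqrt 2 * S1) * Real.sqrt (∑ i ∈ B j, h i ^ 2) := by
          apply mul_le_mul_of_nonneg_right _ (Real.sqrt_nonneg _)
          exact mul_le_mul_of_nonneg_left hsqrt2 (le_of_lt hδ0)
  -- block sqrt sum bound
  have hsqs : (0:ℝ) < Real.sqrt s := Real.sqrt_pos.2 (by exact_mod_cast hs)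
  have hblocksum : ∑ j ∈ Finset.Ico 1 n, Real.sqrt (∑ i ∈ B j, h i ^ 2)
      ≤ (Real.sqrt s)⁻¹ * ∑ i ∈ Tᶜ, |h i| := by
    calc ∑ j ∈ Finset.Ico 1 n, Real.sqrt (∑ i ∈ B j, h i ^ 2)
        ≤ ∑ j ∈ Finset.Ico 1 n, (Real.sqrt s)⁻¹ * ∑ i ∈ B (j-1), |h i| :=
          Finset.sum_le_sum fun j hj => hblock j (Finset.mem_Ico.1 hj).1
      _ = (Real.sqrt s)⁻¹ * ∑ j ∈ Finset.Ico 1 n, ∑ i ∈ B (j-1), |h i| :=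
          (Finset.mul_sum _ _ _).symm
      _ ≤ (Real.sqrt s)⁻¹ * ∑ i ∈ Tᶜ, |h i| := by
          apply mul_le_mul_of_nonneg_left htotal (by positivity)
  have hl1γ : (Real.sqrt s)⁻¹ * ∑ i ∈ Tᶜ, |h i| ≤ γ * S1 := by
    calc (Real.sqrt s)⁻¹ * ∑ i ∈ Tᶜ, |h i|
        ≤ (Real.sqrt s)⁻¹ * (γ * (Real.sqrt s * S1)) :=
          mul_le_mul_of_nonneg_left hL1c (by positivity)
      _ = γ * S1 * ((Real.sqrt s)⁻¹ * Real.sqrt s) := by ring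
      _ = γ * S1 := by rw [inv_mul_cancel₀ (ne_of_gt hsqs), mul_one]
  have hCRfinal : |CR| ≤ Real.sqrt 2 * δ * γ * N1 := by
    calc |CR| ≤ ∑ j ∈ Finset.Ico 1 n, |∑ j', Φ.mulVec (R T01) j' * Φ.mulVec (R (B j)) j'| := by
          rw [hCRsum]; exact Finset.abs_sum_le_sum_abs _ _
      _ ≤ ∑ j ∈ Finset.Ico 1 n, δ * (Real.sqrt 2 * S1) * Real.sqrt (∑ i ∈ B j, h i ^ 2) :=
          Finset.sum_le_sum hper
      _ = δ * (Real.sqrt 2 * S1) * ∑ j ∈ Finset.Ico 1 n, Real.sqrt (∑ i ∈ B j, h i ^ 2) :=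
          (Finset.mul_sum _ _ _).symm
      _ ≤ δ * (Real.sqrt 2 * S1) * ((Real.sqrt s)⁻¹ * ∑ i ∈ Tᶜ, |h i|) := by
          apply mul_le_mul_of_nonneg_left hblocksum (by positivity)
      _ ≤ δ * (Real.sqrt 2 * S1) * (γ * S1) := by
          apply mul_le_mul_of_nonneg_left hl1γ (by positivity)
      _ = Real.sqrt 2 * δ * γ * (S1 * S1) := by ring
      _ = Real.sqrt 2 * δ * γ * N1 := by rw [Real.mul_self_sqrt hN10]
  -- main inequality
  have hmain : (1-δ) * N1 ≤ 2*ε*Real.sqrt (1+δ)*S1 + Real.sqrt 2*δ*γ*N1 := by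
    have h5 : -CR ≤ |CR| := neg_le_abs CR
    calc (1-δ)*N1 ≤ ∑ j, (Φ.mulVec (R T01) j) ^ 2 := hRIPlow
      _ = ∑ j, Φ.mulVec (R T01) j * Φ.mulVec h j - CR := hiden
      _ ≤ Real.sqrt (1+δ) * S1 * (2*ε) + |CR| := by linarith [hbound1]
      _ ≤ 2*ε*Real.sqrt (1+δ)*S1 + Real.sqrt 2*δ*γ*N1 := by linarith [hCRfinal]
  have hργpos : (0:ℝ) < 1 - ρ*γ := by linarith
  have hα0 : 0 ≤ α := by rw [hα]; positivity
  have hS1bound : S1 ≤ α * ε / (1 - ρ*γ) := by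
    have hrel : Real.sqrt 2 * δ = ρ * (1-δ) := by
      rw [hρ]; field_simp
    have hexpand : (1-δ)*(1-ρ*γ)*N1 = (1-δ)*N1 - ρ*(1-δ)*γ*N1 := by ring
    have h6 : Real.sqrt 2*δ*γ*N1 = ρ*(1-δ)*γ*N1 := by rw [hrel]
    have hkey : (1-δ)*(1-ρ*γ)*N1 ≤ 2*ε*Real.sqrt (1+δ)*S1 := by
      linarith [hmain, h6, hexpand]
    rcases eq_or_lt_of_le hS10 with heq | hpos
    · rw [← heq]
      positivity
    · have h7 : (1-δ)*(1-ρ*γ)*S1 ≤ 2*ε*Real.sqrt (1+δ) := by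
        have hN1S : S1 * S1 = N1 := Real.mul_self_sqrt hN10
        have hmul : ((1-δ)*(1-ρ*γ)*S1) * S1 ≤ (2*ε*Real.sqrt (1+δ)) * S1 := by
          calc ((1-δ)*(1-ρ*γ)*S1) * S1 = (1-δ)*(1-ρ*γ)*N1 := by rw [← hN1S]; ring
            _ ≤ 2*ε*Real.sqrt (1+δ)*S1 := hkey
            _ = (2*ε*Real.sqrt (1+δ)) * S1 := by ring
        exact le_of_mul_le_mul_right hmul hpos
      rw [hα, div_mul_eq_mul_div, div_div, le_div_iff₀ (by positivity : (0:ℝ) < (1-δ)*(1-ρ*γ))]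
      nlinarith [h7]
  -- endgame
  set N2 := ∑ i ∈ T01ᶜ, h i ^ 2 with hN2
  have hN20 : 0 ≤ N2 := Finset.sum_nonneg fun i _ => sq_nonneg _
  have hN2sum : N2 = ∑ j ∈ Finset.Ico 1 n, ∑ i ∈ B j, h i ^ 2 := by
    rw [hN2, hcov, Finset.sum_biUnion (fun j _ j' _ hne => hBdisj j j' hne)]
  have hN2' : Real.sqrt N2 ≤ γ * S1 := by
    calc Real.sqrt N2 ≤ ∑ j ∈ Finset.Ico 1 n, Real.sqrt (∑ i ∈ B j, h i ^ 2) := by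
          rw [hN2sum]
          exact sqrt_sum_le _ _ fun j _ => Finset.sum_nonneg fun i _ => sq_nonneg _
      _ ≤ (Real.sqrt s)⁻¹ * ∑ i ∈ Tᶜ, |h i| := hblocksum
      _ ≤ γ * S1 := hl1γ
  have htot : ∑ i, h i ^ 2 = N1 + N2 := by
    rw [hN1, hN2]
    exact (Finset.sum_add_sum_compl T01 _).symm
  have hN2le : N2 ≤ γ^2 * N1 := by
    calc N2 = Real.sqrt N2 ^ 2 := (Real.sq_sqrt hN20).symm
      _ ≤ (γ * S1) ^ 2 := by
          apply pow_le_pow_left₀ (Real.sqrt_nonneg _) hN2' 2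
      _ = γ^2 * S1^2 := by ring
      _ = γ^2 * N1 := by rw [hS1sq]
  calc Real.sqrt (∑ i, h i ^ 2) ≤ Real.sqrt ((1+γ^2) * N1) := by
        apply Real.sqrt_le_sqrt
        rw [htot]
        nlinarith [hN2le]
    _ = Real.sqrt (1+γ^2) * S1 := by rw [Real.sqrt_mul (by positivity)]
    _ ≤ Real.sqrt (1+γ^2) * (α * ε / (1 - ρ*γ)) :=
        mul_le_mul_of_nonneg_left hS1bound (Real.sqrt_nonneg _)
    _ = Real.sqrt (1+γ^2) * α * ε / (1 - ρ*γ) := by ring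


set_option maxHeartbeats 1000000 in
/-- The limiting algebra: if the limit `L` satisfies the fixed point inequality
with the (strictly better) `√(1+γ²)` constant, it is below the smaller root. -/
lemma limit_bound (ρ β μ L γ : ℝ) (hρ0 : 0 < ρ) (hρ1 : ρ < 1) (hβ : 0 < β)
    (hμ : 4 * β / (1-ρ) ≤ μ) (hL0 : 0 ≤ L) (hL : L ≤ μ/2)
    (hγ : γ = L / (μ - L))
    (hineq : L ≤ Real.sqrt (1 + γ^2) * β / (1 - ρ * γ)) :
    L ≤ 2*β / (1 + Real.sqrt (1 - 4*β/μ - 4*β*ρ/μ)) := by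
  have hρ1' : (0:ℝ) < 1 - ρ := by linarith
  have hμ0 : 0 < μ := lt_of_lt_of_le (by positivity) hμ
  have h4β : 4 * β ≤ μ * (1-ρ) := by
    rw [div_le_iff₀ hρ1'] at hμ
    linarith
  set t := Real.sqrt (1 - 4*β/μ - 4*β*ρ/μ) with ht
  have hc : 1 - 4*β/μ - 4*β*ρ/μ = 1 - 4*β*(1+ρ)/μ := by ring
  have hcle : 4*β*(1+ρ)/μ ≤ (1-ρ)*(1+ρ) := by
    rw [div_le_iff₀ hμ0]
    nlinarith
  have hcpos : 0 < 4*β*(1+ρ)/μ := by positivity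
  have harg0 : ρ^2 ≤ 1 - 4*β*(1+ρ)/μ := by nlinarith
  have htρ : ρ ≤ t := by
    rw [ht, hc]
    calc ρ = Real.sqrt (ρ^2) := (Real.sqrt_sq (le_of_lt hρ0)).symm
      _ ≤ _ := Real.sqrt_le_sqrt harg0
  have ht0 : 0 < t := lt_of_lt_of_le hρ0 htρ
  have ht1 : (0:ℝ) < 1 + t := by linarith
  have htsq : t^2 = 1 - 4*β*(1+ρ)/μ := by
    rw [ht, hc]
    exact Real.sq_sqrt (by nlinarith)
  set Bv := 2*β/(1+t) with hBv
  have hBv0 : 0 < Bv := by positivity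
  -- q(Bv) = 0
  have hqB : (1+ρ)*Bv^2 - μ*Bv + β*μ = 0 := by
    rw [hBv]
    have h1t : (1+t) ≠ 0 := ne_of_gt ht1
    field_simp
    have hμc : μ * (1 - t^2) = 4*β*(1+ρ) := by
      rw [htsq]
      field_simp
      ring
    linear_combination (-β) * hμc
  -- Bv ≤ μ(1-ρ)/(2(1+ρ)), in product form
  have hBvle : 2*(1+ρ)*Bv ≤ μ*(1-ρ) := by
    have hrw : 2*(1+ρ)*Bv = (4*β*(1+ρ))/(1+t) := by rw [hBv]; ring
    rw [hrw, div_le_iff₀ ht1]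
    nlinarith [h4β, htρ]
  -- final contradiction argument
  by_contra hcon
  push_neg at hcon
  have hLpos : 0 < L := lt_trans hBv0 hcon
  have hμL : 0 < μ - L := by linarith
  have hγ0 : 0 < γ := by rw [hγ]; positivity
  have hγ1 : γ ≤ 1 := by
    rw [hγ, div_le_one hμL]
    linarith
  have hργ1 : ρ * γ < 1 := lt_of_le_of_lt (by nlinarith) hρ1
  have hργpos : 0 < 1 - ρ*γ := by linarith
  have hstrict : Real.sqrt (1 + γ^2) < 1 + γ := by
    rw [Real.sqrt_lt' (by positivity)]
    nlinarith
  have h1 : L < (1+γ) * β / (1 - ρ*γ) := by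
    refine lt_of_le_of_lt hineq ?_
    rw [div_lt_div_iff₀ hργpos hργpos]
    have := mul_lt_mul_of_pos_right hstrict hβ
    nlinarith [this, hργpos]
  have hγL : γ*(μ-L) = L := by
    rw [hγ]; field_simp
  have h3 : L*(1-ρ*γ) < (1+γ)*β := (lt_div_iff₀ hργpos).1 h1
  have h4 : L*(1-ρ*γ)*(μ-L) < (1+γ)*β*(μ-L) := mul_lt_mul_of_pos_right h3 hμL
  have h5 : L*(1-ρ*γ)*(μ-L) = L*(μ-(1+ρ)*L) := by
    linear_combination (-(ρ*L)) * hγL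
  have h6 : (1+γ)*β*(μ-L) = β*μ := by
    linear_combination β * hγL
  have hq : L*(μ-(1+ρ)*L) < β*μ := by rw [← h5, ← h6]; exact h4
  have hqL : (1+ρ)*L^2 - μ*L + β*μ > 0 := by nlinarith [hq]
  set W := μ - (1+ρ)*Bv with hW
  have hfac : (1+ρ)*L^2 - μ*L + β*μ = (L - Bv)*((1+ρ)*L - W) := by
    rw [hW]
    linear_combination hqB
  have hpos2 : (L - Bv)*((1+ρ)*L - W) > 0 := by rw [← hfac]; exact hqL
  have h7 : L - Bv > 0 := by linarith
  have h8 : (1+ρ)*L - W > 0 := by nlinarith [hpos2, h7]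
  -- combine: (1+ρ)L > μ - (1+ρ)Bv ≥ μ - μ(1-ρ)/2 = μ(1+ρ)/2 while L ≤ μ/2
  rw [hW] at h8
  nlinarith [h8, hBvle, hL, hρ0]


/-- cone constraint derived from weighted ℓ1 minimality -/
lemma cone_general {d : ℕ} (x v c : Fin d → ℝ) (hc : ∀ i, 0 < c i)
    (hmin : ∑ i, |v i| / c i ≤ ∑ i, |x i| / c i)
    (T : Finset (Fin d)) (hT : ∀ i, i ∈ T ↔ x i ≠ 0)
    (lo hi : ℝ) (hlo0 : 0 < lo) (hhi0 : 0 < hi)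
    (hclo : ∀ i, i ∉ T → c i ≤ lo)
    (hchi : ∀ i, i ∈ T → hi ≤ c i) :
    ∑ i ∈ Tᶜ, |v i - x i| ≤ (lo / hi) * ∑ i ∈ T, |v i - x i| := by
  have hTc0 : ∀ i ∈ Tᶜ, x i = 0 := by
    intro i hi
    rw [Finset.mem_compl, hT] at hi
    push_neg at hi
    exact hi
  have hsplit1 : ∑ i, |v i| / c i = ∑ i ∈ T, |v i| / c i + ∑ i ∈ Tᶜ, |v i| / c i :=
    (Finset.sum_add_sum_compl T _).symm
  have h2 : ∑ i ∈ Tᶜ, |v i| / c i = ∑ i ∈ Tᶜ, |v i - x i| / c i := by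
    apply Finset.sum_congr rfl
    intro i hi
    rw [hTc0 i hi, sub_zero]
  have hx : ∑ i, |x i| / c i = ∑ i ∈ T, |x i| / c i := by
    rw [← Finset.sum_add_sum_compl T (fun i => |x i| / c i)]
    have : ∑ i ∈ Tᶜ, |x i| / c i = 0 := by
      apply Finset.sum_eq_zero
      intro i hi
      rw [hTc0 i hi]
      simp
    rw [this, add_zero]
  have hkey : ∑ i ∈ Tᶜ, |v i - x i| / c i ≤ ∑ i ∈ T, |v i - x i| / c i := by
    have h3 : ∑ i ∈ T, |v i| / c i + ∑ i ∈ Tᶜ, |v i - x i| / c i ≤ ∑ i ∈ T, |x i| / c i := by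
      rw [← h2]
      calc ∑ i ∈ T, |v i| / c i + ∑ i ∈ Tᶜ, |v i| / c i = ∑ i, |v i| / c i := hsplit1.symm
        _ ≤ ∑ i, |x i| / c i := hmin
        _ = ∑ i ∈ T, |x i| / c i := hx
    have h4 : ∑ i ∈ T, (|x i| - |v i|) / c i ≤ ∑ i ∈ T, |v i - x i| / c i := by
      apply Finset.sum_le_sum
      intro i hi
      have hnum : |x i| - |v i| ≤ |v i - x i| := by
        calc |x i| - |v i| ≤ |x i - v i| := abs_sub_abs_le_abs_sub _ _
          _ = |v i - x i| := abs_sub_comm _ _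
      rw [div_eq_mul_inv, div_eq_mul_inv]
      exact mul_le_mul_of_nonneg_right hnum (inv_nonneg.2 (hc i).le)
    have h5 : ∑ i ∈ T, (|x i| - |v i|) / c i
        = ∑ i ∈ T, |x i| / c i - ∑ i ∈ T, |v i| / c i := by
      rw [← Finset.sum_sub_distrib]
      apply Finset.sum_congr rfl
      intro i _
      rw [sub_div]
    linarith
  have hA : (1/lo) * ∑ i ∈ Tᶜ, |v i - x i| ≤ ∑ i ∈ Tᶜ, |v i - x i| / c i := by
    rw [Finset.mul_sum]
    apply Finset.sum_le_sum
    intro i hi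
    rw [one_div, inv_mul_eq_div]
    exact div_le_div_of_nonneg_left (abs_nonneg _) (hc i) (hclo i (Finset.mem_compl.1 hi))
  have hB : ∑ i ∈ T, |v i - x i| / c i ≤ (1/hi) * ∑ i ∈ T, |v i - x i| := by
    rw [Finset.mul_sum]
    apply Finset.sum_le_sum
    intro i hi
    rw [one_div, inv_mul_eq_div]
    exact div_le_div_of_nonneg_left (abs_nonneg _) hhi0 (hchi i hi)
  have hcomb : (1/lo) * ∑ i ∈ Tᶜ, |v i - x i| ≤ (1/hi) * ∑ i ∈ T, |v i - x i| :=
    le_trans hA (le_trans hkey hB)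
  calc ∑ i ∈ Tᶜ, |v i - x i| = lo * ((1/lo) * ∑ i ∈ Tᶜ, |v i - x i|) := by
        field_simp
    _ ≤ lo * ((1/hi) * ∑ i ∈ T, |v i - x i|) :=
        mul_le_mul_of_nonneg_left hcomb (le_of_lt hlo0)
    _ = (lo / hi) * ∑ i ∈ T, |v i - x i| := by
        field_simp
end RW1

set_option maxHeartbeats 2000000 in
theorem reweighted_l1_sparse_case
    (m d s : ℕ) (hs : 0 < s)
    (Φ : Matrix (Fin m) (Fin d) ℝ) (δ : ℝ)
    (hδ0 : 0 < δ) (hδ : δ < Real.sqrt 2 - 1)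
    (hRIP : RIP Φ (2 * s) δ)
    (ρ α : ℝ)
    (hρ : ρ = Real.sqrt 2 * δ / (1 - δ))
    (hα : α = 2 * Real.sqrt (1 + δ) / (1 - δ))
    (x : Fin d → ℝ)
    (hxs : (Finset.univ.filter fun i => x i ≠ 0).card ≤ s)
    (e : Fin m → ℝ) (ε : ℝ) (hε : 0 < ε)
    (he : Real.sqrt (∑ j, (e j) ^ 2) ≤ ε)
    (u : Fin m → ℝ) (hu : u = Φ.mulVec x + e)
    (μ : ℝ) (hμmin : ∀ i, x i ≠ 0 → μ ≤ |x i|)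
    (hμne : ∃ i, x i ≠ 0 ∧ |x i| = μ)
    (hμ : μ ≥ 4 * α * ε / (1 - ρ))
    -- the iteratively reweighted ℓ1 algorithm: iterates `X k` with stability
    -- parameters `a k → 0`, `a k > 0`
    (X : ℕ → Fin d → ℝ) (a : ℕ → ℝ) (ha : ∀ k, 0 < a k)
    (ha0 : Tendsto a atTop (nhds 0))
    -- initial step: weights all equal to one (standard ℓ1-minimization)
    (hX0feas : Real.sqrt (∑ j, (Φ.mulVec (X 0) j - u j) ^ 2) ≤ ε)
    (hX0min : ∀ v : Fin d → ℝ, Real.sqrt (∑ j, (Φ.mulVec v j - u j) ^ 2) ≤ ε →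
      ∑ i, |X 0 i| ≤ ∑ i, |v i|)
    -- subsequent steps: reweighted ℓ1-minimization with weights 1/(|X k i| + a k)
    (hXfeas : ∀ k, Real.sqrt (∑ j, (Φ.mulVec (X (k + 1)) j - u j) ^ 2) ≤ ε)
    (hXmin : ∀ k, ∀ v : Fin d → ℝ,
      Real.sqrt (∑ j, (Φ.mulVec v j - u j) ^ 2) ≤ ε →
        ∑ i, |X (k + 1) i| / (|X k i| + a k) ≤ ∑ i, |v i| / (|X k i| + a k))
    -- the limiting approximation
    (xhat : Fin d → ℝ) (hlim : Tendsto X atTop (nhds xhat)) :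
    Real.sqrt (∑ i, (x i - xhat i) ^ 2) ≤
        2 * α * ε / (1 + Real.sqrt (1 - 4 * α * ε / μ - 4 * α * ε * ρ / μ)) ∧
      2 * α * ε / (1 + Real.sqrt (1 - 4 * α * ε / μ - 4 * α * ε * ρ / μ)) ≤
        2 * α * ε / (1 + ρ) := by
  classical
  have hRIP' : RW1.RIPd Φ (2 * s) δ := hRIP
  -- basic constants
  have hs2sq : Real.sqrt 2 ^ 2 = 2 := Real.sq_sqrt (by norm_num)
  have hs2pos : (0:ℝ) < Real.sqrt 2 := Real.sqrt_pos.2 (by norm_num)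
  have hsqrt2lt : Real.sqrt 2 < 2 := by nlinarith [hs2sq, sq_nonneg (Real.sqrt 2 - 2)]
  have hδ1 : δ < 1 := by linarith
  have hδ1' : (0:ℝ) < 1 - δ := by linarith
  have hρ0 : 0 < ρ := by
    rw [hρ]; exact div_pos (mul_pos hs2pos hδ0) hδ1'
  have hρ1 : ρ < 1 := by
    rw [hρ, div_lt_one hδ1']
    have hstep := mul_lt_mul_of_pos_right hδ (show (0:ℝ) < Real.sqrt 2 + 1 by positivity)
    nlinarith [hstep, hs2sq]
  have hρ1' : (0:ℝ) < 1 - ρ := by linarith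
  have hα' : 0 < α := by
    rw [hα]
    exact div_pos (by positivity) hδ1'
  have hβ : 0 < α * ε := mul_pos hα' hε
  have hμ0 : 0 < μ := lt_of_lt_of_le (by positivity) hμ
  have h4β : 4 * (α*ε) ≤ μ * (1-ρ) := by
    rw [ge_iff_le, div_le_iff₀ hρ1'] at hμ
    nlinarith [hμ]
  -- the support
  set T : Finset (Fin d) := Finset.univ.filter fun i => x i ≠ 0 with hTdef
  have hTmem : ∀ i, i ∈ T ↔ x i ≠ 0 := by
    intro i; simp [hTdef]
  -- x is feasible
  have hfeasx : Real.sqrt (∑ j, (Φ.mulVec x j - u j) ^ 2) ≤ ε := by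
    have hcongr : ∀ j, (Φ.mulVec x j - u j) ^ 2 = (e j) ^ 2 := by
      intro j
      rw [hu]
      simp only [Pi.add_apply]
      ring
    calc Real.sqrt (∑ j, (Φ.mulVec x j - u j) ^ 2)
        = Real.sqrt (∑ j, (e j) ^ 2) := by rw [Finset.sum_congr rfl fun j _ => hcongr j]
      _ ≤ ε := he
  -- tube bound
  have htube : ∀ v : Fin d → ℝ, Real.sqrt (∑ j, (Φ.mulVec v j - u j) ^ 2) ≤ ε →
      Real.sqrt (∑ j, (Φ.mulVec (fun i => v i - x i) j) ^ 2) ≤ 2 * ε := by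
    intro v hv
    have hmv : ∀ j, Φ.mulVec (fun i => v i - x i) j
        = (Φ.mulVec v j - u j) - (Φ.mulVec x j - u j) := by
      intro j
      have hvx : (fun i => v i - x i) = v - x := rfl
      rw [hvx, Matrix.mulVec_sub]
      simp only [Pi.sub_apply]
      ring
    calc Real.sqrt (∑ j, (Φ.mulVec (fun i => v i - x i) j) ^ 2)
        = Real.sqrt (∑ j, ((Φ.mulVec v j - u j) - (Φ.mulVec x j - u j)) ^ 2) := by
          rw [Finset.sum_congr rfl fun j _ => by rw [hmv j]]
      _ ≤ Real.sqrt (∑ j, (Φ.mulVec v j - u j) ^ 2)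
            + Real.sqrt (∑ j, (Φ.mulVec x j - u j) ^ 2) :=
          RW1.sqrt_tri_sub _ _
      _ ≤ ε + ε := add_le_add hv hfeasx
      _ = 2 * ε := by ring
  -- the error sequence
  set E : ℕ → ℝ := fun k => Real.sqrt (∑ i, (x i - X k i) ^ 2) with hE
  have hE0 : ∀ k, 0 ≤ E k := fun k => Real.sqrt_nonneg _
  have hEeq : ∀ v : Fin d → ℝ,
      Real.sqrt (∑ i, (x i - v i) ^ 2) = Real.sqrt (∑ i, (v i - x i) ^ 2) := by
    intro v
    congr 1
    apply Finset.sum_congr rfl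
    intro i _
    ring
  -- step bound helper
  have hstepapply : ∀ (v : Fin d → ℝ) (γ : ℝ), 0 ≤ γ → ρ * γ < 1 →
      Real.sqrt (∑ j, (Φ.mulVec v j - u j) ^ 2) ≤ ε →
      (∑ i ∈ Tᶜ, |v i - x i| ≤ γ * ∑ i ∈ T, |v i - x i|) →
      Real.sqrt (∑ i, (x i - v i) ^ 2) ≤ Real.sqrt (1 + γ^2) * α * ε / (1 - ρ * γ) := by
    intro v γ hγ0 hργ hv hcone
    rw [hEeq v]
    exact RW1.step s hs Φ δ hδ0 hδ1 hRIP' ρ α hρ hα T hxs (fun i => v i - x i) γ ε hγ0 hργ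
      (le_of_lt hε) hcone (htube v hv)
  -- the generic RHS bound
  have hRHSle : ∀ γ : ℝ, 0 ≤ γ → γ ≤ 1 →
      Real.sqrt (1 + γ^2) * α * ε / (1 - ρ * γ) ≤ μ / 2 := by
    intro γ hγ0 hγ1
    have h1 : Real.sqrt (1 + γ^2) ≤ Real.sqrt 2 := Real.sqrt_le_sqrt (by nlinarith)
    have h2 : 1 - ρ ≤ 1 - ρ * γ := by nlinarith
    have h3 : Real.sqrt (1 + γ^2) * α * ε ≤ Real.sqrt 2 * α * ε := by
      apply mul_le_mul_of_nonneg_right _ (le_of_lt hε)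
      exact mul_le_mul_of_nonneg_right h1 (le_of_lt hα')
    calc Real.sqrt (1 + γ^2) * α * ε / (1 - ρ * γ)
        ≤ Real.sqrt 2 * α * ε / (1 - ρ) := by
          apply div_le_div₀ (by positivity) h3 hρ1' h2
      _ ≤ 2 * α * ε / (1 - ρ) := by
          apply div_le_div₀ (by positivity) _ hρ1' le_rfl
          nlinarith [hsqrt2lt, hβ]
      _ ≤ μ / 2 := by
          rw [div_le_div_iff₀ hρ1' (by norm_num)]
          nlinarith [h4β]
  -- cone at step 0 (γ = 1)
  have hcone0 : ∑ i ∈ Tᶜ, |X 0 i - x i| ≤ (1:ℝ) * ∑ i ∈ T, |X 0 i - x i| := by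
    have hminw : ∑ i, |X 0 i| / (1:ℝ) ≤ ∑ i, |x i| / (1:ℝ) := by
      simpa using hX0min x hfeasx
    have hres := RW1.cone_general x (X 0) (fun _ => (1:ℝ)) (fun _ => one_pos) hminw T hTmem 1 1
      one_pos one_pos (fun _ _ => le_refl 1) (fun _ _ => le_refl 1)
    simpa using hres
  have hE0bound : E 0 ≤ μ / 2 := by
    refine le_trans (hstepapply (X 0) 1 one_pos.le (by linarith) hX0feas hcone0) ?_
    exact hRHSle 1 one_pos.le le_rfl
  -- weighted cone at later steps
  set γs : ℕ → ℝ := fun k => (E k + a k) / (μ - E k + a k) with hγs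
  have hγfacts : ∀ k, E k ≤ μ/2 → 0 ≤ γs k ∧ γs k ≤ 1 ∧ ρ * γs k < 1 ∧ 0 < μ - E k + a k := by
    intro k hk
    have hden : 0 < μ - E k + a k := by
      have h1 := ha k
      have h2 := hE0 k
      linarith
    have hγ0 : 0 ≤ γs k := div_nonneg (by linarith [hE0 k, (ha k).le]) hden.le
    have hγ1 : γs k ≤ 1 := by
      rw [hγs]
      simp only []
      rw [div_le_one hden]
      linarith
    refine ⟨hγ0, hγ1, ?_, hden⟩
    calc ρ * γs k ≤ ρ * 1 := mul_le_mul_of_nonneg_left hγ1 hρ0.le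
      _ < 1 := by linarith
  have hconek : ∀ k, E k ≤ μ/2 →
      ∑ i ∈ Tᶜ, |X (k+1) i - x i| ≤ γs k * ∑ i ∈ T, |X (k+1) i - x i| := by
    intro k hk
    obtain ⟨hγ0, hγ1, hργ, hden⟩ := hγfacts k hk
    have hlo0 : 0 < E k + a k := by linarith [hE0 k, ha k]
    have hcoord : ∀ i, |x i - X k i| ≤ E k := fun i => RW1.coord_le_l2 (fun i => x i - X k i) i
    have hminw := hXmin k x hfeasx
    have hc : ∀ i, 0 < |X k i| + a k :=
      fun i => add_pos_of_nonneg_of_pos (abs_nonneg _) (ha k)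
    have hclo : ∀ i, i ∉ T → |X k i| + a k ≤ E k + a k := by
      intro i hi
      have hx0 : x i = 0 := by
        have := (hTmem i).not
        rw [this] at hi
        push_neg at hi
        exact hi
      have heqa : |X k i| = |x i - X k i| := by
        rw [hx0, zero_sub, abs_neg]
      have h2 : |X k i| ≤ E k := by rw [heqa]; exact hcoord i
      linarith
    have hchi : ∀ i, i ∈ T → μ - E k + a k ≤ |X k i| + a k := by
      intro i hi
      have hxi : μ ≤ |x i| := hμmin i ((hTmem i).1 hi)
      have h1 : |x i| - |X k i| ≤ |x i - X k i| := abs_sub_abs_le_abs_sub _ _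
      have h2 := hcoord i
      linarith
    have hres := RW1.cone_general x (X (k+1)) (fun i => |X k i| + a k) hc hminw T hTmem
      (E k + a k) (μ - E k + a k) hlo0 hden hclo hchi
    exact hres
  -- induction: all errors ≤ μ/2
  have hEall : ∀ k, E k ≤ μ/2 := by
    intro k
    induction k with
    | zero => exact hE0bound
    | succ k ih =>
        obtain ⟨hγ0, hγ1, hργ, _⟩ := hγfacts k ih
        exact le_trans (hstepapply (X (k+1)) (γs k) hγ0 hργ (hXfeas k) (hconek k ih))
          (hRHSle _ hγ0 hγ1)
  have hEstep : ∀ k, E (k+1) ≤ Real.sqrt (1 + γs k^2) * α * ε / (1 - ρ * γs k) := by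
    intro k
    obtain ⟨hγ0, hγ1, hργ, _⟩ := hγfacts k (hEall k)
    exact hstepapply (X (k+1)) (γs k) hγ0 hργ (hXfeas k) (hconek k (hEall k))
  -- limits
  set L := Real.sqrt (∑ i, (x i - xhat i) ^ 2) with hLdef
  have hcontF : Continuous (fun v : Fin d → ℝ => Real.sqrt (∑ i, (x i - v i) ^ 2)) := by
    apply Real.continuous_sqrt.comp
    apply continuous_finset_sum
    intro i _
    exact (continuous_const.sub (continuous_apply i)).pow 2
  have hEtend : Tendsto E atTop (nhds L) := (hcontF.tendsto xhat).comp hlim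
  have hL0 : 0 ≤ L := Real.sqrt_nonneg _
  have hL2 : L ≤ μ/2 := le_of_tendsto' hEtend hEall
  have hμL : 0 < μ - L := by linarith
  have hγlim : Tendsto γs atTop (nhds (L / (μ - L))) := by
    have h1 : Tendsto (fun k => E k + a k) atTop (nhds (L + 0)) := hEtend.add ha0
    have h2 : Tendsto (fun k => μ - E k + a k) atTop (nhds (μ - L + 0)) :=
      (tendsto_const_nhds.sub hEtend).add ha0
    rw [add_zero] at h1 h2
    exact h1.div h2 (ne_of_gt hμL)
  set γL := L / (μ - L) with hγLdef
  have hγL0 : 0 ≤ γL := div_nonneg hL0 hμL.le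
  have hγL1 : γL ≤ 1 := by
    rw [hγLdef, div_le_one hμL]
    linarith
  have hργL : 0 < 1 - ρ * γL := by nlinarith [hρ0, hρ1]
  have hRtend : Tendsto (fun k => Real.sqrt (1 + γs k^2) * α * ε / (1 - ρ * γs k)) atTop
      (nhds (Real.sqrt (1 + γL^2) * α * ε / (1 - ρ * γL))) := by
    have hnum : Tendsto (fun k => Real.sqrt (1 + γs k ^2)) atTop
        (nhds (Real.sqrt (1 + γL^2))) := by
      have hcg : Continuous (fun g : ℝ => Real.sqrt (1 + g^2)) :=
        Real.continuous_sqrt.comp (continuous_const.add (continuous_pow 2))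
      exact (hcg.tendsto γL).comp hγlim
    have hden : Tendsto (fun k => 1 - ρ * γs k) atTop (nhds (1 - ρ * γL)) :=
      tendsto_const_nhds.sub (hγlim.const_mul ρ)
    exact ((hnum.mul_const α).mul_const ε).div hden (ne_of_gt hργL)
  have hEtend' : Tendsto (fun k => E (k+1)) atTop (nhds L) :=
    hEtend.comp (tendsto_add_atTop_nat 1)
  have hLineq : L ≤ Real.sqrt (1 + γL^2) * (α*ε) / (1 - ρ * γL) := by
    have hle := le_of_tendsto_of_tendsto' hEtend' hRtend hEstep
    calc L ≤ Real.sqrt (1 + γL^2) * α * ε / (1 - ρ * γL) := hle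
      _ = Real.sqrt (1 + γL^2) * (α*ε) / (1 - ρ * γL) := by ring
  have hμ' : 4*(α*ε)/(1-ρ) ≤ μ := by
    have h44 : (4*(α*ε)) = 4*α*ε := by ring
    rw [h44]
    exact hμ
  have hmain := RW1.limit_bound ρ (α*ε) μ L γL hρ0 hρ1 hβ hμ' hL0 hL2 hγLdef hLineq
  constructor
  · have harg : 1 - 4*(α*ε)/μ - 4*(α*ε)*ρ/μ = 1 - 4*α*ε/μ - 4*α*ε*ρ/μ := by ring
    have hnum2 : 2*(α*ε) = 2*α*ε := by ring
    rw [harg, hnum2] at hmain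
    exact hmain
  · have hcle2 : 4*α*ε/μ + 4*α*ε*ρ/μ ≤ (1-ρ)*(1+ρ) := by
      have : 4*α*ε/μ + 4*α*ε*ρ/μ = 4*α*ε*(1+ρ)/μ := by ring
      rw [this, div_le_iff₀ hμ0]
      nlinarith [h4β, hρ0, hρ1]
    have harg0 : ρ^2 ≤ 1 - 4*α*ε/μ - 4*α*ε*ρ/μ := by nlinarith [hcle2]
    have htρ : ρ ≤ Real.sqrt (1 - 4*α*ε/μ - 4*α*ε*ρ/μ) := by
      calc ρ = Real.sqrt (ρ^2) := (Real.sqrt_sq hρ0.le).symm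
        _ ≤ _ := Real.sqrt_le_sqrt harg0
    exact div_le_div_of_nonneg_left (by positivity) (by linarith) (by linarith [htρ])
end
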